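/- Let N be an orchard complete binary L-network with parallel edges h_i and h_e, and let S = s_1...s_k be any complete cherry-reduction sequence for N. Then there exists an index i in [k] such that the partially reduced network N^{s_1...s_{i-1}} contains, as one of its connected components, the network consisting of an unresolved root u with two parallel directed edges to a hybrid node v, where u and v each have one additional directed edge to a distinct leaf (the network N_2 up to leaf labels), and this component contains h_i and h_e. -/

import Mathlib

open scoped Classical

noncomputable section

/-! ## Tags, μ-vectors, cherry types -/

inductive Tag : Type
  | te | hy | rn | ie
deriving DecidableEq, Inhabited

/-- The four cherry types (r2), (r3), (d), (u). -/
inductive CT : Type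
  | r2 | r3 | d | u
deriving DecidableEq, Inhabited

/-- The eight cherry kinds: tree/reticulate combined with the four types. -/
inductive CherryKind : Type
  | Tr2 | Tr3 | Td | Tu | Rr2 | Rr3 | Rd | Ru
deriving DecidableEq, Inhabited

def CherryKind.isTree : CherryKind → Bool
  | .Tr2 | .Tr3 | .Td | .Tu => true
  | _ => false

def CherryKind.ct : CherryKind → CT
  | .Tr2 => .r2 | .Tr3 => .r3 | .Td => .d | .Tu => .u
  | .Rr2 => .r2 | .Rr3 => .r3 | .Rd => .d | .Ru => .u

/-- A simple μ-vector on `n` taxa: coordinate 0 counts paths to hybrid nodes,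
coordinate `i.succ` counts paths to the leaf labelled `i`. -/
abbrev MuVec (n : ℕ) := Fin (n + 1) → ℕ

/-- A μ-entry: a multiset of (one or two) tagged simple μ-vectors. -/
abbrev MuEntry (n : ℕ) := Multiset (MuVec n × Tag)

/-- An edge-based μ-representation: a multiset of μ-entries. -/
abbrev MuRep (n : ℕ) := Multiset (MuEntry n)

/-- Indicator μ-vector `δ_S`. -/
def dlt {n : ℕ} (s : Finset (Fin (n + 1))) : MuVec n := fun i => if i ∈ s then 1 else 0

/-! ## Semidirected multigraphs with labelled leaves -/

/-- A semidirected multigraph on vertex names `ℕ` and edge names `ℕ`;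
`dir e = true` means `e` is directed from `tail e` to `head e`;
`dir e = false` means `e` is an undirected edge with endpoints `tail e`, `head e`.
Leaves may be labelled by taxa in `Fin n`. -/
structure Net (n : ℕ) where
  V : Finset ℕ
  E : Finset ℕ
  tail : ℕ → ℕ
  head : ℕ → ℕ
  dir : ℕ → Bool
  lbl : ℕ → Option (Fin n)

namespace Net

variable {n : ℕ}

def indeg (N : Net n) (v : ℕ) : ℕ :=
  (N.E.filter (fun e => N.dir e = true ∧ N.head e = v)).card
def outdeg (N : Net n) (v : ℕ) : ℕ :=
  (N.E.filter (fun e => N.dir e = true ∧ N.tail e = v)).card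
def undeg (N : Net n) (v : ℕ) : ℕ :=
  (N.E.filter (fun e => N.dir e = false ∧ (N.tail e = v ∨ N.head e = v))).card
def deg (N : Net n) (v : ℕ) : ℕ := N.indeg v + N.outdeg v + N.undeg v

def IsRootNode (N : Net n) (v : ℕ) : Prop := v ∈ N.V ∧ N.indeg v = 0 ∧ N.undeg v = 0
def IsLeafNode (N : Net n) (v : ℕ) : Prop := v ∈ N.V ∧ N.outdeg v = 0 ∧ N.undeg v = 0
def IsHybrid (N : Net n) (v : ℕ) : Prop := 2 ≤ N.indeg v
def IsTreeNode (N : Net n) (v : ℕ) : Prop := N.indeg v ≤ 1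

/-- Source of a step `(e, forward?)` of a semidirected walk. -/
def src (N : Net n) (s : ℕ × Bool) : ℕ := if s.2 then N.tail s.1 else N.head s.1
/-- Destination of a step. -/
def dst (N : Net n) (s : ℕ × Bool) : ℕ := if s.2 then N.head s.1 else N.tail s.1

/-- A step is legal from `u`: the edge is in the graph, directed edges are
traversed forwards, and the step starts at `u`. -/
def stepOK (N : Net n) (u : ℕ) (s : ℕ × Bool) : Prop :=
  s.1 ∈ N.E ∧ (N.dir s.1 = true → s.2 = true) ∧ N.src s = u

/-- `chain N u p x`: `p` is a semidirected walk from `u` to `x`. -/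
def chain (N : Net n) : ℕ → List (ℕ × Bool) → ℕ → Prop
  | u, [], x => u = x
  | u, s :: p, x => N.stepOK u s ∧ N.chain (N.dst s) p x

/-- A semidirected path (walk without repeated vertices) from `u` to `x`. -/
def IsPath (N : Net n) (u x : ℕ) (p : List (ℕ × Bool)) : Prop :=
  u ∈ N.V ∧ N.chain u p x ∧ (u :: p.map N.dst).Nodup

def paths (N : Net n) (u x : ℕ) : Set (List (ℕ × Bool)) := {p | N.IsPath u x p}
def pathsAvoid (N : Net n) (u x : ℕ) (e : ℕ) : Set (List (ℕ × Bool)) :=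
  {p | N.IsPath u x p ∧ e ∉ p.map Prod.fst}

/-- `m N u x` : the number of semidirected paths from `u` to `x`. -/
def m (N : Net n) (u x : ℕ) : ℕ := (N.paths u x).ncard
/-- `mAvoid N u x e` : the number of semidirected paths from `u` to `x` avoiding `e`. -/
def mAvoid (N : Net n) (u x : ℕ) (e : ℕ) : ℕ := (N.pathsAvoid u x e).ncard

/-- One undirected edge joins `u` and `v`. -/
def ustep (N : Net n) (u v : ℕ) : Prop :=
  ∃ e ∈ N.E, N.dir e = false ∧
    ((N.tail e = u ∧ N.head e = v) ∨ (N.tail e = v ∧ N.head e = u))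

/-- `u ~ v`: joined by a path consisting solely of undirected edges. -/
def UndirConn (N : Net n) : ℕ → ℕ → Prop := Relation.ReflTransGen N.ustep

/-- A semidirected cycle. -/
def IsSDCycle (N : Net n) (p : List (ℕ × Bool)) : Prop :=
  ∃ u, p ≠ [] ∧ N.chain u p u ∧ (p.map N.dst).Nodup ∧ (p.map Prod.fst).Nodup

def Acyclic (N : Net n) : Prop := ∀ p, ¬ N.IsSDCycle p

/-- `x` is the leaf labelled `a`. -/
def HasLeaf (N : Net n) (a : Fin n) (x : ℕ) : Prop := x ∈ N.V ∧ N.lbl x = some a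

/-- `N` is an `L`-network: a semidirected acyclic graph whose leaves are tree
nodes, with leaves injectively labelled. -/
structure IsLNetwork (N : Net n) : Prop where
  wfT : ∀ e ∈ N.E, N.tail e ∈ N.V
  wfH : ∀ e ∈ N.E, N.head e ∈ N.V
  acyclic : N.Acyclic
  leavesTree : ∀ v, N.IsLeafNode v → N.IsTreeNode v
  lblV : ∀ v, v ∉ N.V → N.lbl v = none
  lblLeaf : ∀ v ∈ N.V, ((N.lbl v).isSome ↔ N.IsLeafNode v)
  lblInj : ∀ v ∈ N.V, ∀ w ∈ N.V, N.lbl v ≠ none → N.lbl v = N.lbl w → v = w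

/-- Binary: roots of degree 0, 2 or 3; leaves of degree 0 or 1; other nodes of degree 3. -/
def IsBinary (N : Net n) : Prop :=
  ∀ v ∈ N.V,
    (N.IsRootNode v → N.deg v = 0 ∨ N.deg v = 2 ∨ N.deg v = 3) ∧
    (N.IsLeafNode v → N.deg v = 0 ∨ N.deg v = 1) ∧
    (¬ N.IsRootNode v → ¬ N.IsLeafNode v → N.deg v = 3)

/-- The class of `v` under `~` is a singleton. -/
def TrivialClass (N : Net n) (v : ℕ) : Prop := ∀ w, N.UndirConn v w → w = v

/-- Complete: edges incident to leaves are directed (toward the leaves), and every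
nontrivial class under `~` has in-degree 0 in the contraction `N/~`. -/
def IsComplete (N : Net n) : Prop :=
  (∀ e ∈ N.E, N.dir e = false → ¬ N.IsLeafNode (N.tail e) ∧ ¬ N.IsLeafNode (N.head e)) ∧
  (∀ v ∈ N.V, ¬ N.TrivialClass v → ∀ e ∈ N.E, N.dir e = true → ¬ N.UndirConn (N.head e) v)

/-- The class `[v]` is a root of the contraction `N/~`: no directed edge points into it. -/
def IsRootClass (N : Net n) (v : ℕ) : Prop :=
  v ∈ N.V ∧ ∀ e ∈ N.E, N.dir e = true → ¬ N.UndirConn (N.head e) v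

/-- `v` belongs to an unresolved root component. -/
def UnresolvedRC (N : Net n) (v : ℕ) : Prop :=
  N.IsRootClass v ∧ (¬ N.TrivialClass v ∨ N.deg v = 3)

/-- `e` belongs to the admissible edge set of the root component of `v0`. -/
def AdmFor (N : Net n) (v0 e : ℕ) : Prop := e ∈ N.E ∧ N.UndirConn (N.tail e) v0

/-! ## μ-representation of a network -/

def Hybs (N : Net n) : Finset ℕ := N.V.filter (fun v => N.IsHybrid v)

def mToLbl (N : Net n) (v : ℕ) (a : Fin n) : ℕ :=
  ∑ x ∈ N.V.filter (fun x => N.lbl x = some a), N.m v x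
def mToLblAvoid (N : Net n) (v : ℕ) (a : Fin n) (e : ℕ) : ℕ :=
  ∑ x ∈ N.V.filter (fun x => N.lbl x = some a), N.mAvoid v x e

/-- Numbers of paths from `v` to hybrids (coordinate 0) and to each leaf. -/
def muFrom (N : Net n) (v : ℕ) : MuVec n :=
  fun i => Fin.cases (∑ h ∈ N.Hybs, N.m v h) (fun a => N.mToLbl v a) i

/-- Numbers of paths from `v` avoiding edge `e`. -/
def muAt (N : Net n) (e : ℕ) (v : ℕ) : MuVec n :=
  fun i => Fin.cases (∑ h ∈ N.Hybs, N.mAvoid v h e) (fun a => N.mToLblAvoid v a e) i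

/-- The μ-entry of an edge. -/
def muEntryEdge (N : Net n) (e : ℕ) : MuEntry n :=
  if N.dir e = true then
    let t : Tag := if N.IsHybrid (N.head e) then Tag.hy else Tag.te
    if N.UnresolvedRC (N.tail e) then
      ({(N.muAt e (N.head e), t),
        (fun i => N.muFrom (N.tail e) i - N.muAt e (N.tail e) i, Tag.ie)} : MuEntry n)
    else ({(N.muAt e (N.head e), t)} : MuEntry n)
  else
    ({(N.muAt e (N.head e), Tag.te), (N.muAt e (N.tail e), Tag.te)} : MuEntry n)

/-- One μ-entry per root component (indexed by the minimal representative). -/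
def rootEntries (N : Net n) : MuRep n :=
  ((N.V.filter (fun v => N.IsRootClass v ∧ ∀ w ∈ N.V, N.UndirConn v w → v ≤ w)).val).map
    (fun v => ({(N.muFrom v, Tag.rn)} : MuEntry n))

/-- The edge-based μ-representation of `N`. -/
def muRep (N : Net n) : MuRep n :=
  N.E.val.map (fun e => N.muEntryEdge e) + N.rootEntries

end Net

/-! ## Operations on μ-representations -/

variable {n : ℕ}

/-- Multiplicity of a simple μ-vector in a μ-representation: the number of
entries (with multiplicity) containing it. -/
def multVec (μs : MuRep n) (m : MuVec n) : ℕ :=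
  μs.countP (fun ent => ∃ t, (m, t) ∈ ent)

def hasTagged (μs : MuRep n) (mt : MuVec n × Tag) : Prop := ∃ ent ∈ μs, mt ∈ ent

/-- The entry of a simple μ-vector (meaningful when its multiplicity is 1). -/
def entryOf (μs : MuRep n) (m : MuVec n) : MuEntry n :=
  if h : ∃ ent ∈ μs, ∃ t, (m, t) ∈ ent then h.choose else 0

/-- The tag of a simple μ-vector (meaningful when its multiplicity is 1). -/
def tagOf (μs : MuRep n) (m : MuVec n) : Tag :=
  if hasTagged μs (m, Tag.rn) then Tag.rn
  else if hasTagged μs (m, Tag.ie) then Tag.ie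
  else if hasTagged μs (m, Tag.te) then Tag.te
  else Tag.hy

/-- The tagged μ-vectors other than `m` in the entry of `m`. -/
def invParts (μs : MuRep n) (m : MuVec n) : MuEntry n :=
  (entryOf μs m).filter (fun mt => mt.1 ≠ m)

def hasInv (μs : MuRep n) (m : MuVec n) : Prop := invParts μs m ≠ 0

/-- The inverse `m⁻¹` of `m` (meaningful when it exists). -/
def invVec (μs : MuRep n) (m : MuVec n) : MuVec n := ((invParts μs m).toList.headI).1

/-- `(a,b)` is a tree cherry of the μ-representation. -/
def MuTreeCherry (μs : MuRep n) (a b : Fin n) : Prop :=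
  multVec μs (dlt ({a.succ, b.succ} : Finset (Fin (n + 1)))) = 1

/-- Type of a tree cherry of a μ-representation. -/
def muTreeType (μs : MuRep n) (a b : Fin n) : CT :=
  let mab := dlt ({a.succ, b.succ} : Finset (Fin (n + 1)))
  match tagOf μs mab with
  | Tag.rn => CT.r2
  | Tag.ie => CT.r3
  | Tag.te =>
      if (¬ hasInv μs mab) ∨ (∃ mt ∈ invParts μs mab, mt.2 = Tag.ie) then CT.d else CT.u
  | Tag.hy => CT.u

/-- `(a,b)` is a reticulate cherry of the μ-representation. -/
def MuRetCherry (μs : MuRep n) (a b : Fin n) : Prop :=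
  multVec μs (dlt ({0, a.succ} : Finset (Fin (n + 1)))) = 2 ∧
    (multVec μs (dlt ({0, a.succ, b.succ} : Finset (Fin (n + 1)))) = 1 ∨
      (multVec μs (dlt ({0, a.succ, b.succ} : Finset (Fin (n + 1)))) = 2 ∧
        ∀ ent ∈ μs, ∀ t : Tag,
          (dlt ({0, a.succ, b.succ} : Finset (Fin (n + 1))), t) ∈ ent → t = Tag.ie))

/-- Type of a reticulate cherry of a μ-representation. -/
def muRetType (μs : MuRep n) (a b : Fin n) : CT :=
  let mab := dlt ({0, a.succ, b.succ} : Finset (Fin (n + 1)))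
  if multVec μs mab = 2 then CT.r3
  else
    match tagOf μs mab with
    | Tag.rn => CT.r2
    | Tag.ie => CT.r3
    | Tag.te =>
        if (¬ hasInv μs mab) ∨ (∃ mt ∈ invParts μs mab, mt.2 = Tag.ie) then CT.d else CT.u
    | Tag.hy => CT.u

/-- `δ_{0,a,b}⁻¹`, defined as `δ_{0,a}` in the multiplicity-2 (parallel) case. -/
def retInv (μs : MuRep n) (a b : Fin n) : MuVec n :=
  if multVec μs (dlt ({0, a.succ, b.succ} : Finset (Fin (n + 1)))) = 2 then
    dlt ({0, a.succ} : Finset (Fin (n + 1)))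
  else invVec μs (dlt ({0, a.succ, b.succ} : Finset (Fin (n + 1))))

/-- The internal μ-entry of a reticulate cherry `(a,b)` with respect to `μs`. -/
def internalEntry (μs : MuRep n) (a b : Fin n) : MuEntry n :=
  let d0a := dlt ({0, a.succ} : Finset (Fin (n + 1)))
  let d0ab := dlt ({0, a.succ, b.succ} : Finset (Fin (n + 1)))
  if multVec μs d0ab = 1 ∧
      ((¬ hasInv μs d0ab) ∨ (∃ mt ∈ invParts μs d0ab, mt.2 = Tag.ie)) then
    ({(d0a, Tag.hy)} : MuEntry n)
  else
    ({(d0a, Tag.hy), (fun i => d0ab i + retInv μs a b i - d0a i, Tag.ie)} : MuEntry n)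

/-- Remove the whole entry of `m`. -/
def removeEntryOf (μs : MuRep n) (m : MuVec n) : MuRep n := μs.erase (entryOf μs m)

/-- Remove `m⁻¹` from the entry of `m` (keeping `m`). -/
def removeInvOf (μs : MuRep n) (m : MuVec n) : MuRep n :=
  (μs.erase (entryOf μs m)) + {(entryOf μs m).filter (fun mt => mt.1 = m)}

/-- Remove `m` from its entry (keeping the rest of the entry). -/
def removeVecOf (μs : MuRep n) (m : MuVec n) : MuRep n :=
  (μs.erase (entryOf μs m)) + {(entryOf μs m).filter (fun mt => mt.1 ≠ m)}

def entryOfT (μs : MuRep n) (mt : MuVec n × Tag) : MuEntry n :=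
  if h : ∃ ent ∈ μs, mt ∈ ent then h.choose else 0

/-- Remove one occurrence of the tagged μ-vector `mt` from some entry containing it. -/
def removeTaggedOnce (μs : MuRep n) (mt : MuVec n × Tag) : MuRep n :=
  (μs.erase (entryOfT μs mt)) + {(entryOfT μs mt).erase mt}

/-- Change the tag of `m⁻¹` (within the entry of `m`) to `ie`. -/
def retagInvIe (μs : MuRep n) (m : MuVec n) : MuRep n :=
  let ent := entryOf μs m
  (μs.erase ent) +
    {ent.filter (fun mt => mt.1 = m) + (invParts μs m).map (fun mt => (mt.1, Tag.ie))}

/-- Change the tag of one occurrence of the tagged μ-vector `mt` to `t'`. -/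
def retagTaggedTo (μs : MuRep n) (mt : MuVec n × Tag) (t' : Tag) : MuRep n :=
  let ent := entryOfT μs mt
  (μs.erase ent) + {(ent.erase mt) + ({(mt.1, t')} : MuEntry n)}

/-- Apply `f` to every simple μ-vector of every entry. -/
def mapVecs (f : MuVec n → MuVec n) (μs : MuRep n) : MuRep n :=
  μs.map (fun ent => ent.map (fun mt => (f mt.1, mt.2)))

/-- `(m_0, m_a, m_b, …) ↦ (m_0, 0, m_b, …)`. -/
def zeroCoordA (a : Fin n) (m : MuVec n) : MuVec n :=
  fun i => if i = a.succ then 0 else m i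

/-- `(m_0, m_a, m_b, …) ↦ (m_0 − m_a, m_a − m_b, m_b, …)`. -/
def retAdj (a b : Fin n) (m : MuVec n) : MuVec n :=
  fun i => if i = 0 then m 0 - m a.succ else if i = a.succ then m a.succ - m b.succ else m i

/-- Reduction of a tree cherry `(a,b)` on a μ-representation. -/
def muReduceTree (μs : MuRep n) (a b : Fin n) : MuRep n :=
  let dab := dlt ({a.succ, b.succ} : Finset (Fin (n + 1)))
  let da := dlt ({a.succ} : Finset (Fin (n + 1)))
  let db := dlt ({b.succ} : Finset (Fin (n + 1)))
  let μ1 :=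
    match muTreeType μs a b with
    | CT.r2 => removeEntryOf μs db
    | CT.d => removeEntryOf μs db
    | CT.r3 => removeVecOf (removeInvOf μs db) dab
    | CT.u => retagInvIe (removeEntryOf μs db) dab
  let μ2 := removeEntryOf μ1 da
  mapVecs (zeroCoordA a) μ2

/-- Reduction of a reticulate cherry `(a,b)` on a μ-representation. -/
def muReduceRet (μs : MuRep n) (a b : Fin n) : MuRep n :=
  let d0a := dlt ({0, a.succ} : Finset (Fin (n + 1)))
  let d0ab := dlt ({0, a.succ, b.succ} : Finset (Fin (n + 1)))
  let da := dlt ({a.succ} : Finset (Fin (n + 1)))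
  let db := dlt ({b.succ} : Finset (Fin (n + 1)))
  let intEnt := internalEntry μs a b
  let μ1 :=
    match muRetType μs a b with
    | CT.r2 => removeEntryOf μs db
    | CT.d => removeEntryOf μs db
    | CT.r3 => removeTaggedOnce (removeInvOf μs db) (d0ab, Tag.ie)
    | CT.u => retagInvIe (removeEntryOf μs db) d0ab
  let μ2 := removeEntryOf μ1 da
  let μ3 := μ2.erase intEnt
  let μ4 := retagTaggedTo μ3 (d0a, Tag.hy) Tag.te
  mapVecs (retAdj a b) μ4

/-- Reduction of a cherry `(a,b)` on a μ-representation. -/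
def muReduceCherry (μs : MuRep n) (a b : Fin n) : MuRep n :=
  if MuTreeCherry μs a b then muReduceTree μs a b
  else if MuRetCherry μs a b then muReduceRet μs a b
  else μs

/-! ## Cherries and reductions on networks -/

namespace Net

/-- The node labelled `a` (meaningful when it exists). -/
def labelNode (N : Net n) (a : Fin n) : ℕ :=
  ((N.V.filter (fun x => N.lbl x = some a)).sort (· ≤ ·)).headI

def inEdges (N : Net n) (x : ℕ) : Finset ℕ :=
  N.E.filter (fun e => N.dir e = true ∧ N.head e = x)

/-- The parent of `x` (meaningful when `x` has in-degree 1). -/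
def parentOf (N : Net n) (x : ℕ) : ℕ :=
  N.tail (((N.inEdges x).sort (· ≤ ·)).headI)

def IsParentOf (N : Net n) (p x : ℕ) : Prop :=
  ∃ e ∈ N.E, N.dir e = true ∧ N.tail e = p ∧ N.head e = x

/-- `(a,b)` is a tree cherry of `N`. -/
def TreeCherry (N : Net n) (a b : Fin n) : Prop :=
  ∃ x y p, N.HasLeaf a x ∧ N.HasLeaf b y ∧ x ≠ y ∧ N.IsParentOf p x ∧ N.IsParentOf p y

/-- `(a,b)` is a reticulate cherry of `N`. -/
def RetCherry (N : Net n) (a b : Fin n) : Prop :=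
  ∃ x y pa pb, N.HasLeaf a x ∧ N.HasLeaf b y ∧ x ≠ y ∧
    N.IsParentOf pa x ∧ N.IsHybrid pa ∧ N.IsParentOf pb y ∧ N.IsParentOf pb pa

def IsCherry (N : Net n) (a b : Fin n) : Prop := N.TreeCherry a b ∨ N.RetCherry a b

/-- The type of a cherry `(a,b)`, read off from the parent of `b`. -/
def cherryType (N : Net n) (a b : Fin n) : CT :=
  let pb := N.parentOf (N.labelNode b)
  if N.IsRootNode pb ∧ N.deg pb = 2 then CT.r2
  else if N.IsRootNode pb ∧ N.deg pb = 3 then CT.r3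
  else if 0 < N.undeg pb then CT.u
  else CT.d

def incE (N : Net n) (v : ℕ) : Finset ℕ :=
  N.E.filter (fun e => N.tail e = v ∨ N.head e = v)

/-- A node is suppressible (Def. of node suppression). -/
def Suppressible (N : Net n) (v : ℕ) : Prop :=
  N.lbl v = none ∧
    ((N.deg v = 2 ∧ ¬ N.IsRootNode v) ∨
      (N.deg v = 1 ∧ N.IsRootNode v ∧ ∀ e ∈ N.incE v, ¬ N.IsHybrid (N.head e)))

/-- Replace the two edges `e1`, `e2` at `v` by the single edge (named `e1`)
from `p` to `c`, directed iff `d`. -/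
def replaceEdge (N : Net n) (v e1 e2 p c : ℕ) (d : Bool) : Net n :=
  { V := N.V.erase v
    E := N.E.erase e2
    tail := Function.update N.tail e1 p
    head := Function.update N.head e1 c
    dir := Function.update N.dir e1 d
    lbl := N.lbl }

/-- Suppress a (suppressible) node of degree 1 or 2. -/
def suppress (N : Net n) (v : ℕ) : Net n :=
  match (N.incE v).sort (· ≤ ·) with
  | [e] => { N with V := N.V.erase v, E := N.E.erase e }
  | [e1, e2] =>
      let o1 := if N.tail e1 = v then N.head e1 else N.tail e1
      let o2 := if N.tail e2 = v then N.head e2 else N.tail e2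
      if N.dir e1 = true ∧ N.tail e1 = v then N.replaceEdge v e1 e2 o2 o1 true
      else if N.dir e2 = true ∧ N.tail e2 = v then N.replaceEdge v e1 e2 o1 o2 true
      else if N.dir e1 = true then N.replaceEdge v e1 e2 o1 o2 true
      else if N.dir e2 = true then N.replaceEdge v e1 e2 o2 o1 true
      else N.replaceEdge v e1 e2 o1 o2 false
  | _ => N

def suppressIf (N : Net n) (v : ℕ) : Net n := if N.Suppressible v then N.suppress v else N

/-- Delete the leaf `x` and its incident edge(s). -/
def deleteLeaf (N : Net n) (x : ℕ) : Net n :=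
  { V := N.V.erase x
    E := N.E \ N.incE x
    tail := N.tail
    head := N.head
    dir := N.dir
    lbl := Function.update N.lbl x none }

/-- Reduction of a tree cherry `(a,b)`. -/
def reduceTree (N : Net n) (a b : Fin n) : Net n :=
  let x := N.labelNode a
  let p := N.parentOf x
  (N.deleteLeaf x).suppressIf p

/-- Reduction of a reticulate cherry `(a,b)`: delete the internal hybrid edge,
suppress `p_b` if suppressible, then suppress `p_a`. -/
def reduceRet (N : Net n) (a b : Fin n) : Net n :=
  let x := N.labelNode a
  let y := N.labelNode b
  let pa := N.parentOf x
  let pb := N.parentOf y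
  let eint :=
    ((N.E.filter (fun e => N.dir e = true ∧ N.tail e = pb ∧ N.head e = pa)).sort (· ≤ ·)).headI
  let N1 : Net n := { N with E := N.E.erase eint }
  ((N1.suppressIf pb).suppress pa)

/-- Reduction of the cherry `(a,b)` in `N`, written `N^{(a,b)}`. -/
def reduceCherry (N : Net n) (a b : Fin n) : Net n :=
  if N.TreeCherry a b then N.reduceTree a b
  else if N.RetCherry a b then N.reduceRet a b
  else N

def reduceSeq (N : Net n) (S : List (Fin n × Fin n)) : Net n :=
  S.foldl (fun M s => M.reduceCherry s.1 s.2) N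

def IsRedSeq : Net n → List (Fin n × Fin n) → Prop
  | _, [] => True
  | N, s :: S => N.IsCherry s.1 s.2 ∧ IsRedSeq (N.reduceCherry s.1 s.2) S

/-- `N` is the trivial forest on `L0`: isolated nodes labelled bijectively by `L0`. -/
def IsTrivialForest (N : Net n) (L0 : Finset (Fin n)) : Prop :=
  N.E = ∅ ∧ (∀ v ∈ N.V, ∃ a ∈ L0, N.lbl v = some a) ∧
    (∀ a ∈ L0, ∃ v ∈ N.V, N.lbl v = some a)

/-- `N` is orchard: some cherry reduction sequence reduces it to a trivial forest. -/
def Orchard (N : Net n) : Prop :=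
  ∃ S L0, N.IsRedSeq S ∧ (N.reduceSeq S).IsTrivialForest L0

def freshV (N : Net n) : ℕ := N.V.sup id + 1
def freshE (N : Net n) : ℕ := N.E.sup id + 1

/-- Addition of the cherry `(a,b)` of kind `k` to `N` (identity if conditions fail). -/
def addCherry (N : Net n) (a b : Fin n) (k : CherryKind) : Net n :=
  let y := N.labelNode b
  let w := N.parentOf y
  let ewb := ((N.inEdges y).sort (· ≤ ·)).headI
  let va := N.freshV
  let vpb := N.freshV + 1
  let e1 := N.freshE
  let e2 := N.freshE + 1
  let x := N.labelNode a
  let pa := N.parentOf x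
  let isolated : Prop := y ∈ N.V ∧ N.deg y = 0 ∧ (N.lbl y).isSome
  let nonIsolated : Prop := y ∈ N.V ∧ N.deg y ≠ 0 ∧ (N.lbl y).isSome
  let resolvedRoot : Prop := N.IsRootNode w ∧ N.deg w = 2
  let aLeaf : Prop := ∃ xx, N.HasLeaf a xx
  match k with
  | CherryKind.Tr2 =>
      if isolated then
        { V := insert vpb (insert va N.V)
          E := insert e2 (insert e1 N.E)
          tail := Function.update (Function.update N.tail e1 vpb) e2 vpb
          head := Function.update (Function.update N.head e1 va) e2 y
          dir := Function.update (Function.update N.dir e1 true) e2 true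
          lbl := Function.update N.lbl va (some a) }
      else N
  | CherryKind.Tr3 =>
      if nonIsolated ∧ resolvedRoot then
        { V := insert va N.V
          E := insert e1 N.E
          tail := Function.update N.tail e1 w
          head := Function.update N.head e1 va
          dir := Function.update N.dir e1 true
          lbl := Function.update N.lbl va (some a) }
      else N
  | CherryKind.Td =>
      if nonIsolated ∧ ¬ resolvedRoot then
        { V := insert vpb (insert va N.V)
          E := insert e2 (insert e1 N.E)
          tail := Function.update (Function.update N.tail e1 vpb) e2 vpb
          head :=
            Function.update (Function.update (Function.update N.head ewb vpb) e1 va) e2 y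
          dir := Function.update (Function.update N.dir e1 true) e2 true
          lbl := Function.update N.lbl va (some a) }
      else N
  | CherryKind.Tu =>
      if nonIsolated ∧ ¬ resolvedRoot then
        { V := insert vpb (insert va N.V)
          E := insert e2 (insert e1 N.E)
          tail := Function.update (Function.update N.tail e1 vpb) e2 vpb
          head :=
            Function.update (Function.update (Function.update N.head ewb vpb) e1 va) e2 y
          dir :=
            Function.update (Function.update (Function.update N.dir ewb false) e1 true) e2 true
          lbl := Function.update N.lbl va (some a) }
      else N
  | CherryKind.Rr2 =>
      if aLeaf ∧ isolated then
        { V := insert vpb N.V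
          E := insert e2 (insert e1 N.E)
          tail := Function.update (Function.update N.tail e1 vpb) e2 vpb
          head := Function.update (Function.update N.head e1 pa) e2 y
          dir := Function.update (Function.update N.dir e1 true) e2 true
          lbl := N.lbl }
      else N
  | CherryKind.Rr3 =>
      if aLeaf ∧ nonIsolated ∧ resolvedRoot then
        { V := N.V
          E := insert e1 N.E
          tail := Function.update N.tail e1 w
          head := Function.update N.head e1 pa
          dir := Function.update N.dir e1 true
          lbl := N.lbl }
      else N
  | CherryKind.Rd =>
      if aLeaf ∧ nonIsolated ∧ ¬ resolvedRoot then
        { V := insert vpb N.V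
          E := insert e2 (insert e1 N.E)
          tail := Function.update (Function.update N.tail e1 vpb) e2 vpb
          head :=
            Function.update (Function.update (Function.update N.head ewb vpb) e1 pa) e2 y
          dir := Function.update (Function.update N.dir e1 true) e2 true
          lbl := N.lbl }
      else N
  | CherryKind.Ru =>
      if aLeaf ∧ nonIsolated ∧ ¬ resolvedRoot then
        { V := insert vpb N.V
          E := insert e2 (insert e1 N.E)
          tail := Function.update (Function.update N.tail e1 vpb) e2 vpb
          head :=
            Function.update (Function.update (Function.update N.head ewb vpb) e1 pa) e2 y
          dir :=
            Function.update (Function.update (Function.update N.dir ewb false) e1 true) e2 true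
          lbl := N.lbl }
      else N

/-- Isomorphism of leaf-labelled semidirected networks. -/
def Isom (N M : Net n) : Prop :=
  ∃ f g : ℕ → ℕ,
    Set.InjOn f ↑N.V ∧ N.V.image f = M.V ∧
    Set.InjOn g ↑N.E ∧ N.E.image g = M.E ∧
    (∀ e ∈ N.E, M.dir (g e) = N.dir e) ∧
    (∀ e ∈ N.E, N.dir e = true →
      M.tail (g e) = f (N.tail e) ∧ M.head (g e) = f (N.head e)) ∧
    (∀ e ∈ N.E, N.dir e = false →
      (M.tail (g e) = f (N.tail e) ∧ M.head (g e) = f (N.head e)) ∨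
        (M.tail (g e) = f (N.head e) ∧ M.head (g e) = f (N.tail e))) ∧
    (∀ v ∈ N.V, M.lbl (f v) = N.lbl v)

/-- `N` is a (complete binary) `L`-network. -/
def Good (N : Net n) : Prop := N.IsLNetwork ∧ N.IsBinary ∧ N.IsComplete

/-- The edge-based μ-dissimilarity: size of the symmetric difference of the
multisets of μ-entries. -/
def dmu (N M : Net n) : ℕ := ((N.muRep - M.muRep) + (M.muRep - N.muRep)).card

/-- `(a,b)` is a reticulate cherry of `N` whose internal and external hybrid
edges are parallel. -/
def ParallelRet (N : Net n) (a b : Fin n) : Prop :=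
  ∃ x y pa pb hi he, N.HasLeaf a x ∧ N.HasLeaf b y ∧
    N.IsParentOf pa x ∧ N.IsHybrid pa ∧ N.IsParentOf pb y ∧
    hi ≠ he ∧ hi ∈ N.E ∧ he ∈ N.E ∧ N.dir hi = true ∧ N.dir he = true ∧
    N.tail hi = pb ∧ N.head hi = pa ∧ N.tail he = pb ∧ N.head he = pa

end Net

/-! ## Auxiliary development for stmt10 -/

namespace Net

variable {n : ℕ}

lemma mem_incE {M : Net n} {p e : ℕ} :
    e ∈ M.incE p ↔ e ∈ M.E ∧ (M.tail e = p ∨ M.head e = p) := by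
  simp [Net.incE]

lemma incE_subset {M : Net n} {p : ℕ} : M.incE p ⊆ M.E := Finset.filter_subset _ _

lemma headI_mem {l : List ℕ} (h : l ≠ []) : l.headI ∈ l := by
  cases l with
  | nil => simp at h
  | cons a t => simp

lemma sort_card_two {s : Finset ℕ} (h : s.card = 2) :
    ∃ c d : ℕ, c ≠ d ∧ s.sort (· ≤ ·) = [c, d] ∧ s = {c, d} := by
  have hl : (s.sort (· ≤ ·)).length = 2 := by rw [Finset.length_sort, h]
  obtain ⟨c, d, hcd⟩ := List.length_eq_two.mp hl
  refine ⟨c, d, ?_, hcd, ?_⟩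
  · have := Finset.sort_nodup s (· ≤ ·)
    rw [hcd] at this
    simp at this
    exact this
  · ext x
    have := Finset.mem_sort (s := s) (r := (· ≤ ·)) (a := x)
    rw [hcd] at this
    simp only [List.mem_cons, List.mem_singleton] at this
    simp [← this]

lemma card_three {a b c : ℕ} (h1 : a ≠ b) (h2 : a ≠ c) (h3 : b ≠ c) :
    ({a, b, c} : Finset ℕ).card = 3 := by
  rw [Finset.card_insert_of_notMem (by simp [h1, h2]),
    Finset.card_insert_of_notMem (by simp [h3]), Finset.card_singleton]

lemma card_four {a b c d : ℕ} (h1 : a ≠ b) (h2 : a ≠ c) (h3 : a ≠ d) (h4 : b ≠ c)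
    (h5 : b ≠ d) (h6 : c ≠ d) : ({a, b, c, d} : Finset ℕ).card = 4 := by
  rw [Finset.card_insert_of_notMem (by simp [h1, h2, h3]), card_three h4 h5 h6]

/-- The invariant carried along the reduction sequence. -/
structure Par (M : Net n) (hi he : ℕ) : Prop where
  hiE : hi ∈ M.E
  heE : he ∈ M.E
  hne : hi ≠ he
  dhi : M.dir hi = true
  dhe : M.dir he = true
  teq : M.tail he = M.tail hi
  heq : M.head he = M.head hi
  tV : M.tail hi ∈ M.V
  hV : M.head hi ∈ M.V
  noloop : ∀ e ∈ M.E, M.tail e ≠ M.head e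
  wfT : ∀ e ∈ M.E, M.tail e ∈ M.V
  wfH : ∀ e ∈ M.E, M.head e ∈ M.V
  leafO : ∀ z ∈ M.V, (M.lbl z).isSome → ∀ e ∈ M.E, ¬(M.dir e = true ∧ M.tail e = z)
  leafU : ∀ z ∈ M.V, (M.lbl z).isSome →
    ∀ e ∈ M.E, ¬(M.dir e = false ∧ (M.tail e = z ∨ M.head e = z))
  leafI : ∀ z ∈ M.V, (M.lbl z).isSome → ∀ e ∈ M.E, ∀ f ∈ M.E,
    M.dir e = true → M.head e = z → M.dir f = true → M.head f = z → e = f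
  lblNotV : ∀ z, z ∉ M.V → M.lbl z = none
  inj : ∀ z ∈ M.V, ∀ w ∈ M.V, M.lbl z ≠ none → M.lbl z = M.lbl w → z = w
  ucard : (M.incE (M.tail hi)).card ≤ 3
  hv : ∃ ev, ev ≠ hi ∧ ev ≠ he ∧ M.incE (M.head hi) = {hi, he, ev} ∧
    M.dir ev = true ∧ M.tail ev = M.head hi

namespace Par

variable {M : Net n} {hi he : ℕ}

lemma uv (P : Par M hi he) : M.tail hi ≠ M.head hi := P.noloop hi P.hiE

lemma u_unlabeled (P : Par M hi he) : ¬ (M.lbl (M.tail hi)).isSome := fun h =>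
  P.leafO _ P.tV h hi P.hiE ⟨P.dhi, rfl⟩

lemma evE (P : Par M hi he) : ∀ {ev : ℕ}, M.incE (M.head hi) = {hi, he, ev} → ev ∈ M.E := by
  intro ev h
  have : ev ∈ M.incE (M.head hi) := by rw [h]; simp
  exact incE_subset this

lemma v_unlabeled (P : Par M hi he) : ¬ (M.lbl (M.head hi)).isSome := by
  obtain ⟨ev, _, _, hinc, hd, ht⟩ := P.hv
  intro h
  exact P.leafO _ P.hV h ev (P.evE hinc) ⟨hd, ht⟩

lemma lab_ne_u (P : Par M hi he) {z : ℕ} (h : (M.lbl z).isSome) : z ≠ M.tail hi := by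
  rintro rfl; exact P.u_unlabeled h

lemma lab_ne_v (P : Par M hi he) {z : ℕ} (h : (M.lbl z).isSome) : z ≠ M.head hi := by
  rintro rfl; exact P.v_unlabeled h

/-- Edges incident to a vertex other than `u`, `v` are distinct from `hi`, `he`. -/
lemma hi_not_inc (P : Par M hi he) {p : ℕ} (hp1 : p ≠ M.tail hi) (hp2 : p ≠ M.head hi) :
    hi ∉ M.incE p := by
  rw [mem_incE]; rintro ⟨-, h | h⟩
  · exact hp1 h.symm
  · exact hp2 h.symm

lemma he_not_inc (P : Par M hi he) {p : ℕ} (hp1 : p ≠ M.tail hi) (hp2 : p ≠ M.head hi) :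
    he ∉ M.incE p := by
  rw [mem_incE]; rintro ⟨-, h | h⟩
  · exact hp1 (h.symm.trans P.teq)
  · exact hp2 (h.symm.trans P.heq)

lemma hi_mem_incE_u (P : Par M hi he) : hi ∈ M.incE (M.tail hi) :=
  mem_incE.mpr ⟨P.hiE, Or.inl rfl⟩

lemma he_mem_incE_u (P : Par M hi he) : he ∈ M.incE (M.tail hi) :=
  mem_incE.mpr ⟨P.heE, Or.inl P.teq⟩

/-- `u` is not a hybrid node: it has at most one in-edge. -/
lemma not_hybrid_u (P : Par M hi he) : ¬ M.IsHybrid (M.tail hi) := by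
  intro h
  rw [Net.IsHybrid, Net.indeg] at h
  obtain ⟨e, heM, f, hfM, hef⟩ := Finset.one_lt_card.mp (lt_of_lt_of_le one_lt_two h)
  simp only [Finset.mem_filter] at heM hfM
  have hehi : e ≠ hi := by
    intro h'
    have h2 := heM.2.2
    rw [h'] at h2
    exact P.uv h2.symm
  have hehe : e ≠ he := by
    intro h'
    have h2 := heM.2.2
    rw [h', P.heq] at h2
    exact P.uv h2.symm
  have hfhi : f ≠ hi := by
    intro h'
    have h2 := hfM.2.2
    rw [h'] at h2
    exact P.uv h2.symm
  have hfhe : f ≠ he := by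
    intro h'
    have h2 := hfM.2.2
    rw [h', P.heq] at h2
    exact P.uv h2.symm
  have hsub : ({hi, he, e, f} : Finset ℕ) ⊆ M.incE (M.tail hi) := by
    intro x hx
    simp only [Finset.mem_insert, Finset.mem_singleton] at hx
    rcases hx with rfl | rfl | rfl | rfl
    · exact P.hi_mem_incE_u
    · exact P.he_mem_incE_u
    · exact mem_incE.mpr ⟨heM.1, Or.inr heM.2.2⟩
    · exact mem_incE.mpr ⟨hfM.1, Or.inr hfM.2.2⟩
  have := Finset.card_le_card hsub
  rw [card_four P.hne hehi.symm hfhi.symm hehe.symm hfhe.symm hef] at this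
  have := P.ucard
  omega

/-- A labelled node's only incident edge is its unique in-edge. -/
lemma leaf_inc (P : Par M hi he) {z e : ℕ} (hz : z ∈ M.V) (hl : (M.lbl z).isSome)
    (heE : e ∈ M.E) (hd : M.dir e = true) (hh : M.head e = z) :
    ∀ f ∈ M.E, (M.tail f = z ∨ M.head f = z) → f = e := by
  intro f hfE hf
  by_cases hdf : M.dir f = true
  · rcases hf with hf | hf
    · exact absurd ⟨hdf, hf⟩ (P.leafO z hz hl f hfE)
    · exact P.leafI z hz hl f hfE e heE hdf hf hd hh
  · exact absurd ⟨by simpa using hdf, hf⟩ (P.leafU z hz hl f hfE)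

lemma labelNode_eq (P : Par M hi he) {a : Fin n} {z : ℕ} (hz : z ∈ M.V)
    (hl : M.lbl z = some a) : M.labelNode a = z := by
  have hfil : M.V.filter (fun x => M.lbl x = some a) = {z} := by
    ext x
    simp only [Finset.mem_filter, Finset.mem_singleton]
    constructor
    · rintro ⟨hxV, hx⟩
      exact P.inj x hxV z hz (by simp [hx]) (hx.trans hl.symm)
    · rintro rfl; exact ⟨hz, hl⟩
  rw [Net.labelNode, hfil, Finset.sort_singleton]
  rfl

lemma inEdges_eq (P : Par M hi he) {z e : ℕ} (hz : z ∈ M.V) (hl : (M.lbl z).isSome)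
    (heE : e ∈ M.E) (hd : M.dir e = true) (hh : M.head e = z) :
    M.inEdges z = {e} := by
  ext f
  simp only [Net.inEdges, Finset.mem_filter, Finset.mem_singleton]
  constructor
  · rintro ⟨hfE, hdf, hf⟩
    exact P.leafI z hz hl f hfE e heE hdf hf hd hh
  · rintro rfl; exact ⟨heE, hd, hh⟩

lemma parentOf_eq (P : Par M hi he) {z e : ℕ} (hz : z ∈ M.V) (hl : (M.lbl z).isSome)
    (heE : e ∈ M.E) (hd : M.dir e = true) (hh : M.head e = z) :
    M.parentOf z = M.tail e := by
  rw [Net.parentOf, P.inEdges_eq hz hl heE hd hh, Finset.sort_singleton]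
  rfl

/-- A labelled node with an in-edge has `incE = {e}`. -/
lemma leaf_incE_eq (P : Par M hi he) {z e : ℕ} (hz : z ∈ M.V) (hl : (M.lbl z).isSome)
    (heE : e ∈ M.E) (hd : M.dir e = true) (hh : M.head e = z) :
    M.incE z = {e} := by
  ext f
  simp only [mem_incE, Finset.mem_singleton]
  constructor
  · rintro ⟨hfE, hf⟩
    exact P.leaf_inc hz hl heE hd hh f hfE hf
  · rintro rfl; exact ⟨heE, Or.inr hh⟩

end Par

end Net
namespace Net

variable {n : ℕ}

namespace Par

variable {M : Net n} {hi he : ℕ}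

/-- Erasing an edge away from `u`, `v`'s third edge preserves the invariant. -/
lemma par_erase (P : Par M hi he) {e0 : ℕ} (h1 : e0 ≠ hi) (h2 : e0 ≠ he)
    (h3 : e0 ∉ M.incE (M.head hi)) :
    Par { M with E := M.E.erase e0 } hi he := by
  have hIncE : ∀ p, Net.incE { M with E := M.E.erase e0 } p = (M.incE p).erase e0 := by
    intro p
    ext f
    simp only [Net.incE, Finset.mem_filter, Finset.mem_erase]
    tauto
  refine ⟨?_, ?_, P.hne, P.dhi, P.dhe, P.teq, P.heq, P.tV, P.hV, ?_, ?_, ?_, ?_, ?_, ?_,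
    P.lblNotV, P.inj, ?_, ?_⟩
  · exact Finset.mem_erase.mpr ⟨fun hc => h1 hc.symm, P.hiE⟩
  · exact Finset.mem_erase.mpr ⟨fun hc => h2 hc.symm, P.heE⟩
  · intro e heM; exact P.noloop e (Finset.mem_of_mem_erase heM)
  · intro e heM; exact P.wfT e (Finset.mem_of_mem_erase heM)
  · intro e heM; exact P.wfH e (Finset.mem_of_mem_erase heM)
  · intro z hz hl e heM; exact P.leafO z hz hl e (Finset.mem_of_mem_erase heM)
  · intro z hz hl e heM; exact P.leafU z hz hl e (Finset.mem_of_mem_erase heM)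
  · intro z hz hl e heM f hfM
    exact P.leafI z hz hl e (Finset.mem_of_mem_erase heM) f (Finset.mem_of_mem_erase hfM)
  · rw [hIncE]
    exact le_trans (Finset.card_le_card (Finset.erase_subset _ _)) P.ucard
  · obtain ⟨ev, hv1, hv2, hv3, hv4, hv5⟩ := P.hv
    refine ⟨ev, hv1, hv2, ?_, hv4, hv5⟩
    have h3' := h3
    rw [hv3] at h3'
    show Net.incE _ (M.head hi) = _
    rw [hIncE, hv3]
    exact Finset.erase_eq_of_notMem h3' 

/-- Deleting a labelled leaf other than `v`'s child preserves the invariant. -/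
lemma par_deleteLeaf (P : Par M hi he) {x : ℕ} (hxV : x ∈ M.V) (hxl : (M.lbl x).isSome)
    (hevx : ∀ e ∈ M.E, M.dir e = true → M.tail e = M.head hi → M.head e ≠ x) :
    Par (M.deleteLeaf x) hi he := by
  have hxu : x ≠ M.tail hi := P.lab_ne_u hxl
  have hxv : x ≠ M.head hi := P.lab_ne_v hxl
  have hhix : hi ∉ M.incE x := by
    rw [mem_incE]; rintro ⟨-, h | h⟩
    · exact hxu h.symm
    · exact hxv h.symm
  have hhex : he ∉ M.incE x := by
    rw [mem_incE]; rintro ⟨-, h | h⟩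
    · exact hxu (h.symm.trans P.teq)
    · exact hxv (h.symm.trans P.heq)
  have hE' : ∀ e, e ∈ (M.deleteLeaf x).E ↔ e ∈ M.E ∧ ¬(M.tail e = x ∨ M.head e = x) := by
    intro e
    simp only [Net.deleteLeaf, Finset.mem_sdiff, mem_incE]
    tauto
  have hlbl' : ∀ z, z ≠ x → (M.deleteLeaf x).lbl z = M.lbl z := by
    intro z hz
    simp only [Net.deleteLeaf]
    exact Function.update_of_ne hz _ _
  refine ⟨?_, ?_, P.hne, P.dhi, P.dhe, P.teq, P.heq, ?_, ?_, ?_, ?_, ?_, ?_, ?_, ?_, ?_, ?_,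
    ?_, ?_⟩
  · exact (hE' hi).mpr ⟨P.hiE, fun h => hhix (mem_incE.mpr ⟨P.hiE, h⟩)⟩
  · exact (hE' he).mpr ⟨P.heE, fun h => hhex (mem_incE.mpr ⟨P.heE, h⟩)⟩
  · exact Finset.mem_erase.mpr ⟨fun hc => hxu hc.symm, P.tV⟩
  · exact Finset.mem_erase.mpr ⟨fun hc => hxv hc.symm, P.hV⟩
  · intro e heM; exact P.noloop e ((hE' e).mp heM).1
  · intro e heM
    have h := (hE' e).mp heM
    exact Finset.mem_erase.mpr ⟨fun hc => h.2 (Or.inl hc), P.wfT e h.1⟩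
  · intro e heM
    have h := (hE' e).mp heM
    exact Finset.mem_erase.mpr ⟨fun hc => h.2 (Or.inr hc), P.wfH e h.1⟩
  · intro z hz hl e heM
    have hzx : z ≠ x := (Finset.mem_erase.mp hz).1
    rw [hlbl' z hzx] at hl
    exact P.leafO z (Finset.mem_of_mem_erase hz) hl e ((hE' e).mp heM).1
  · intro z hz hl e heM
    have hzx : z ≠ x := (Finset.mem_erase.mp hz).1
    rw [hlbl' z hzx] at hl
    exact P.leafU z (Finset.mem_of_mem_erase hz) hl e ((hE' e).mp heM).1
  · intro z hz hl e heM f hfM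
    have hzx : z ≠ x := (Finset.mem_erase.mp hz).1
    rw [hlbl' z hzx] at hl
    exact P.leafI z (Finset.mem_of_mem_erase hz) hl e ((hE' e).mp heM).1 f ((hE' f).mp hfM).1
  · intro z hz
    by_cases hzx : z = x
    · subst hzx
      simp [Net.deleteLeaf]
    · rw [hlbl' z hzx]
      exact P.lblNotV z (fun hc => hz (Finset.mem_erase.mpr ⟨hzx, hc⟩))
  · intro z hz w hw hne heq
    have hzx : z ≠ x := (Finset.mem_erase.mp hz).1
    have hwx : w ≠ x := (Finset.mem_erase.mp hw).1
    rw [hlbl' z hzx] at hne heq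
    rw [hlbl' w hwx] at heq
    exact P.inj z (Finset.mem_of_mem_erase hz) w (Finset.mem_of_mem_erase hw) hne heq
  · refine le_trans (Finset.card_le_card ?_) P.ucard
    intro e heM
    rw [mem_incE] at heM ⊢
    exact ⟨((hE' e).mp heM.1).1, heM.2⟩
  · obtain ⟨ev, hv1, hv2, hv3, hv4, hv5⟩ := P.hv
    have hevE : ev ∈ M.E := P.evE hv3
    refine ⟨ev, hv1, hv2, ?_, hv4, hv5⟩
    ext e
    rw [mem_incE]
    constructor
    · rintro ⟨heM, hinc⟩
      have : e ∈ M.incE (M.head hi) := mem_incE.mpr ⟨((hE' e).mp heM).1, hinc⟩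
      rw [hv3] at this
      exact this
    · intro h
      simp only [Finset.mem_insert, Finset.mem_singleton] at h
      have heM : e ∈ M.E := by
        rcases h with rfl | rfl | rfl
        · exact P.hiE
        · exact P.heE
        · exact hevE
      have hincd : M.tail e = M.head hi ∨ M.head e = M.head hi := by
        have he2 : e ∈ M.incE (M.head hi) := by rw [hv3]; simpa using h
        exact (mem_incE.mp he2).2
      refine ⟨(hE' e).mpr ⟨heM, ?_⟩, hincd⟩
      rintro (hc | hc)
      · rcases h with rfl | rfl | rfl
        · exact hxu hc.symm
        · exact hxu (by rw [← P.teq]; exact hc.symm)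
        · exact hxv (by rw [← hv5]; exact hc.symm)
      · rcases h with rfl | rfl | rfl
        · exact hxv hc.symm
        · exact hxv (by rw [← P.heq]; exact hc.symm)
        · exact hevx e heM hv4 hv5 hc

end Par

end Net
namespace Net

variable {n : ℕ}

namespace Par

variable {M : Net n} {hi he : ℕ}

set_option maxHeartbeats 2000000 in
/-- Suppressing a degree-2 unlabelled node `p ∉ {u,v}` whose two incident edges are an
out-edge to a labelled node `z` and an in-or-undirected edge towards `q` preserves the
invariant, where the replacement edge is directed `q → z`. -/
lemma par_shape (P : Par M hi he) {p eL f3 q z k d : ℕ}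
    (hpu : p ≠ M.tail hi) (hpv : p ≠ M.head hi) (hlp : M.lbl p = none)
    (hincp : M.incE p = {eL, f3})
    (heLE : eL ∈ M.E) (hdL : M.dir eL = true) (htL : M.tail eL = p) (hhL : M.head eL = z)
    (hf3E : f3 ∈ M.E)
    (hf3 : (M.dir f3 = true ∧ M.head f3 = p ∧ M.tail f3 = q) ∨
      (M.dir f3 = false ∧ ((M.tail f3 = p ∧ M.head f3 = q) ∨ (M.head f3 = p ∧ M.tail f3 = q))))
    (hzlab : (M.lbl z).isSome)
    (hkd : ({k, d} : Finset ℕ) = {eL, f3}) (hkdne : k ≠ d) :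
    Par (M.replaceEdge p k d q z true) hi he := by
  have hzV : z ∈ M.V := hhL ▸ P.wfH eL heLE
  have hzp : z ≠ p := fun hc => P.noloop eL heLE (htL.trans (hc ▸ hhL).symm)
  have hqV : q ∈ M.V := by
    rcases hf3 with ⟨_, _, hq⟩ | ⟨_, ⟨_, hq⟩ | ⟨_, hq⟩⟩
    · exact hq ▸ P.wfT f3 hf3E
    · exact hq ▸ P.wfH f3 hf3E
    · exact hq ▸ P.wfT f3 hf3E
  have hqp : q ≠ p := by
    rcases hf3 with ⟨_, hp', hq⟩ | ⟨_, ⟨hp', hq⟩ | ⟨hp', hq⟩⟩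
    · exact fun hc => P.noloop f3 hf3E ((hq.trans hc).trans hp'.symm)
    · exact fun hc => P.noloop f3 hf3E (hp'.trans ((hq.trans hc).symm))
    · exact fun hc => P.noloop f3 hf3E ((hq.trans hc).trans hp'.symm)
  have hqunlab : ¬ (M.lbl q).isSome := by
    intro hq
    rcases hf3 with ⟨hd', _, ht'⟩ | ⟨hd', hor⟩
    · exact P.leafO q hqV hq f3 hf3E ⟨hd', ht'⟩
    · refine P.leafU q hqV hq f3 hf3E ⟨hd', ?_⟩
      rcases hor with ⟨_, hq'⟩ | ⟨_, hq'⟩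
      · exact Or.inr hq'
      · exact Or.inl hq'
  have hqz : q ≠ z := fun hc => hqunlab (hc ▸ hzlab)
  have hzu : z ≠ M.tail hi := P.lab_ne_u hzlab
  have hzv : z ≠ M.head hi := P.lab_ne_v hzlab
  have hkmem : k = eL ∨ k = f3 := by
    have : k ∈ ({eL, f3} : Finset ℕ) := hkd ▸ (by simp : k ∈ ({k, d} : Finset ℕ))
    simpa using this
  have hdmem : d = eL ∨ d = f3 := by
    have : d ∈ ({eL, f3} : Finset ℕ) := hkd ▸ (by simp : d ∈ ({k, d} : Finset ℕ))
    simpa using this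
  have heLkd : eL = k ∨ eL = d := by
    have : eL ∈ ({k, d} : Finset ℕ) := by rw [hkd]; simp
    simpa using this
  have hf3kd : f3 = k ∨ f3 = d := by
    have : f3 ∈ ({k, d} : Finset ℕ) := by rw [hkd]; simp
    simpa using this
  have hkE : k ∈ M.E := by rcases hkmem with rfl | rfl <;> assumption
  have hkinc : k ∈ M.incE p := by rw [hincp]; simpa using hkmem
  have hdinc : d ∈ M.incE p := by rw [hincp]; simpa using hdmem
  have hhik : hi ≠ k := fun hc => P.hi_not_inc hpu hpv (hc ▸ hkinc)
  have hhid : hi ≠ d := fun hc => P.hi_not_inc hpu hpv (hc ▸ hdinc)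
  have hhek : he ≠ k := fun hc => P.he_not_inc hpu hpv (hc ▸ hkinc)
  have hhed : he ≠ d := fun hc => P.he_not_inc hpu hpv (hc ▸ hdinc)
  set N' := M.replaceEdge p k d q z true with hN'
  have hE' : ∀ e, e ∈ N'.E ↔ e ∈ M.E ∧ e ≠ d := by
    intro e
    simp only [hN', Net.replaceEdge, Finset.mem_erase]
    tauto
  have hV' : ∀ w, w ∈ N'.V ↔ w ∈ M.V ∧ w ≠ p := by
    intro w
    simp only [hN', Net.replaceEdge, Finset.mem_erase]
    tauto
  have htk : N'.tail k = q := by simp [hN', Net.replaceEdge]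
  have hhk : N'.head k = z := by simp [hN', Net.replaceEdge]
  have hdk : N'.dir k = true := by simp [hN', Net.replaceEdge]
  have htne : ∀ e, e ≠ k → N'.tail e = M.tail e := by
    intro e hek
    simp [hN', Net.replaceEdge, Function.update_of_ne hek]
  have hhne : ∀ e, e ≠ k → N'.head e = M.head e := by
    intro e hek
    simp [hN', Net.replaceEdge, Function.update_of_ne hek]
  have hdne : ∀ e, e ≠ k → N'.dir e = M.dir e := by
    intro e hek
    simp [hN', Net.replaceEdge, Function.update_of_ne hek]
  have hlbl : N'.lbl = M.lbl := rfl
  have hinz : ∀ f ∈ M.E, M.dir f = true → M.head f = z → f = eL :=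
    fun f hf hdf hhf => P.leafI z hzV hzlab f hf eL heLE hdf hhf hdL hhL
  have hnotp : ∀ e ∈ M.E, e ≠ k → e ≠ d → M.tail e ≠ p ∧ M.head e ≠ p := by
    intro e heM hek hed
    have hni : e ∉ M.incE p := by
      rw [hincp, ← hkd]
      simp only [Finset.mem_insert, Finset.mem_singleton]
      tauto
    constructor <;> intro hc
    · exact hni (mem_incE.mpr ⟨heM, Or.inl hc⟩)
    · exact hni (mem_incE.mpr ⟨heM, Or.inr hc⟩)
  refine ⟨?_, ?_, P.hne, ?_, ?_, ?_, ?_, ?_, ?_, ?_, ?_, ?_, ?_, ?_, ?_, ?_, ?_, ?_, ?_⟩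
  · exact (hE' hi).mpr ⟨P.hiE, hhid⟩
  · exact (hE' he).mpr ⟨P.heE, hhed⟩
  · rw [hdne hi hhik]; exact P.dhi
  · rw [hdne he hhek]; exact P.dhe
  · rw [htne hi hhik, htne he hhek]; exact P.teq
  · rw [hhne hi hhik, hhne he hhek]; exact P.heq
  · rw [htne hi hhik]; exact (hV' _).mpr ⟨P.tV, hpu.symm⟩
  · rw [hhne hi hhik]; exact (hV' _).mpr ⟨P.hV, hpv.symm⟩
  -- noloop
  · intro e heM
    by_cases hek : e = k
    · subst hek; rw [htk, hhk]; exact hqz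
    · rw [htne e hek, hhne e hek]; exact P.noloop e ((hE' e).mp heM).1
  -- wfT
  · intro e heM
    by_cases hek : e = k
    · subst hek; rw [htk]; exact (hV' _).mpr ⟨hqV, hqp⟩
    · rw [htne e hek]
      obtain ⟨heM', hed⟩ := (hE' e).mp heM
      exact (hV' _).mpr ⟨P.wfT e heM', (hnotp e heM' hek hed).1⟩
  -- wfH
  · intro e heM
    by_cases hek : e = k
    · subst hek; rw [hhk]; exact (hV' _).mpr ⟨hzV, hzp⟩
    · rw [hhne e hek]
      obtain ⟨heM', hed⟩ := (hE' e).mp heM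
      exact (hV' _).mpr ⟨P.wfH e heM', (hnotp e heM' hek hed).2⟩
  -- leafO
  · intro w hw hlw e heM hcon
    have hwV := ((hV' w).mp hw).1
    rw [hlbl] at hlw
    by_cases hek : e = k
    · subst hek
      rw [htk] at hcon
      exact hqunlab (hcon.2 ▸ hlw)
    · rw [hdne e hek, htne e hek] at hcon
      exact P.leafO w hwV hlw e ((hE' e).mp heM).1 hcon
  -- leafU
  · intro w hw hlw e heM hcon
    have hwV := ((hV' w).mp hw).1
    rw [hlbl] at hlw
    by_cases hek : e = k
    · subst hek
      rw [hdk] at hcon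
      simp at hcon
    · rw [hdne e hek, htne e hek, hhne e hek] at hcon
      exact P.leafU w hwV hlw e ((hE' e).mp heM).1 hcon
  -- leafI
  · intro w hw hlw e heM f hfM hde hhe hdf hhf
    have hwV := ((hV' w).mp hw).1
    rw [hlbl] at hlw
    by_cases hwz : w = z
    · subst hwz
      have hkey : ∀ g, g ∈ N'.E → N'.dir g = true → N'.head g = w → g = k := by
        intro g hg hdg hhg
        by_contra hgk
        rw [hdne g hgk] at hdg
        rw [hhne g hgk] at hhg
        have hgeL : g = eL := hinz g ((hE' g).mp hg).1 hdg hhg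
        rcases heLkd with h | h
        · exact hgk (hgeL.trans h)
        · exact ((hE' g).mp hg).2 (hgeL.trans h)
      rw [hkey e heM hde hhe, hkey f hfM hdf hhf]
    · have hek : e ≠ k := by
        intro hc
        rw [hc, hhk] at hhe
        exact hwz hhe.symm
      have hfk : f ≠ k := by
        intro hc
        rw [hc, hhk] at hhf
        exact hwz hhf.symm
      rw [hdne e hek] at hde
      rw [hhne e hek] at hhe
      rw [hdne f hfk] at hdf
      rw [hhne f hfk] at hhf
      exact P.leafI w hwV hlw e ((hE' e).mp heM).1 f ((hE' f).mp hfM).1 hde hhe hdf hhf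
  -- lblNotV
  · intro w hw
    rw [hlbl]
    by_cases hwp : w = p
    · exact hwp ▸ hlp
    · exact P.lblNotV w (fun hc => hw ((hV' w).mpr ⟨hc, hwp⟩))
  -- inj
  · intro a ha b hb hne' heq'
    rw [hlbl] at hne' heq'
    exact P.inj a ((hV' a).mp ha).1 b ((hV' b).mp hb).1 hne' heq'
  -- ucard
  · have hhu : N'.tail hi = M.tail hi := htne hi hhik
    rw [hhu]
    by_cases hqu : q = M.tail hi
    · have hf3u : f3 ∈ M.incE (M.tail hi) := by
        refine mem_incE.mpr ⟨hf3E, ?_⟩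
        rcases hf3 with ⟨_, _, hq'⟩ | ⟨_, ⟨_, hq'⟩ | ⟨_, hq'⟩⟩
        · exact Or.inl (hq'.trans hqu)
        · exact Or.inr (hq'.trans hqu)
        · exact Or.inl (hq'.trans hqu)
      rcases hkmem with hk | hk
      · -- k = eL, hence d = f3
        have hd3 : d = f3 := by
          rcases hdmem with h | h
          · exact absurd (hk.trans h.symm) hkdne
          · exact h
        refine le_trans (Finset.card_le_card
          (show N'.incE (M.tail hi) ⊆ insert k ((M.incE (M.tail hi)).erase f3) from ?_)) ?_
        · intro e heI
          rw [mem_incE] at heI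
          by_cases hek : e = k
          · simp [hek]
          · rw [htne e hek, hhne e hek] at heI
            refine Finset.mem_insert.mpr (Or.inr (Finset.mem_erase.mpr
              ⟨hd3 ▸ ((hE' e).mp heI.1).2, mem_incE.mpr ⟨((hE' e).mp heI.1).1, heI.2⟩⟩))
        · have h1 := Finset.card_insert_le k ((M.incE (M.tail hi)).erase f3)
          have h2 := Finset.card_erase_of_mem hf3u
          have h3 := P.ucard
          have h4 : 1 ≤ (M.incE (M.tail hi)).card := Finset.card_pos.mpr ⟨f3, hf3u⟩
          omega
      · -- k = f3
        refine le_trans (Finset.card_le_card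
          (show N'.incE (M.tail hi) ⊆ M.incE (M.tail hi) from ?_)) P.ucard
        intro e heI
        rw [mem_incE] at heI
        by_cases hek : e = k
        · exact hek ▸ hk ▸ hf3u
        · rw [htne e hek, hhne e hek] at heI
          exact mem_incE.mpr ⟨((hE' e).mp heI.1).1, heI.2⟩
    · refine le_trans (Finset.card_le_card
        (show N'.incE (M.tail hi) ⊆ M.incE (M.tail hi) from ?_)) P.ucard
      intro e heI
      rw [mem_incE] at heI
      by_cases hek : e = k
      · exfalso
        rw [hek, htk, hhk] at heI
        rcases heI.2 with h | h
        · exact hqu h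
        · exact hzu h
      · rw [htne e hek, hhne e hek] at heI
        exact mem_incE.mpr ⟨((hE' e).mp heI.1).1, heI.2⟩
  -- hv
  · obtain ⟨ev, hv1, hv2, hv3, hv4, hv5⟩ := P.hv
    have hevE := P.evE hv3
    have hhv : N'.head hi = M.head hi := hhne hi hhik
    by_cases hqv : q = M.head hi
    · -- f3 = ev, the new third edge at v is k
      have hf3v : f3 = ev := by
        have hmem : f3 ∈ ({hi, he, ev} : Finset ℕ) := by
          rw [← hv3]
          refine mem_incE.mpr ⟨hf3E, ?_⟩
          rcases hf3 with ⟨_, _, hq'⟩ | ⟨_, ⟨_, hq'⟩ | ⟨_, hq'⟩⟩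
          · exact Or.inl (hq'.trans hqv)
          · exact Or.inr (hq'.trans hqv)
          · exact Or.inl (hq'.trans hqv)
        simp only [Finset.mem_insert, Finset.mem_singleton] at hmem
        rcases hmem with h | h | h
        · exfalso
          apply P.hi_not_inc hpu hpv
          rw [← h, hincp]
          simp
        · exfalso
          apply P.he_not_inc hpu hpv
          rw [← h, hincp]
          simp
        · exact h
      refine ⟨k, hhik.symm, hhek.symm, ?_, hdk, by rw [htk, hhv]; exact hqv⟩
      rw [hhv]
      ext e
      rw [mem_incE]
      constructor
      · rintro ⟨heN, hinc⟩
        by_cases hek : e = k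
        · simp [hek]
        · rw [htne e hek, hhne e hek] at hinc
          have heold : e ∈ M.incE (M.head hi) :=
            mem_incE.mpr ⟨((hE' e).mp heN).1, hinc⟩
          rw [hv3] at heold
          simp only [Finset.mem_insert, Finset.mem_singleton] at heold ⊢
          rcases heold with h | h | h
          · exact Or.inl h
          · exact Or.inr (Or.inl h)
          · exfalso
            rcases hf3kd with h2 | h2
            · exact hek (h.trans (hf3v.symm.trans h2))
            · exact ((hE' e).mp heN).2 (h.trans (hf3v.symm.trans h2))
      · intro h
        simp only [Finset.mem_insert, Finset.mem_singleton] at h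
        rcases h with h | h | h
        · rw [h]
          exact ⟨(hE' hi).mpr ⟨P.hiE, hhid⟩, by
            rw [htne _ hhik, hhne _ hhik]; exact Or.inr rfl⟩
        · rw [h]
          exact ⟨(hE' he).mpr ⟨P.heE, hhed⟩, by
            rw [htne _ hhek, hhne _ hhek]; exact Or.inr P.heq⟩
        · rw [h]
          exact ⟨(hE' k).mpr ⟨hkE, hkdne⟩, Or.inl (by rw [htk]; exact hqv)⟩
    · -- ev is untouched
      have hevk : ev ≠ k := by
        intro hc
        rcases hkmem with h | h
        · rw [hc, h] at hv5
          exact hpv (htL ▸ hv5)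
        · rw [hc, h] at hv5
          rcases hf3 with ⟨_, _, hq'⟩ | ⟨_, ⟨hp', _⟩ | ⟨_, hq'⟩⟩
          · exact hqv (hq' ▸ hv5)
          · exact hpv (hp' ▸ hv5)
          · exact hqv (hq' ▸ hv5)
      have hevd : ev ≠ d := by
        intro hc
        rcases hdmem with h | h
        · rw [hc, h] at hv5
          exact hpv (htL ▸ hv5)
        · rw [hc, h] at hv5
          rcases hf3 with ⟨_, _, hq'⟩ | ⟨_, ⟨hp', _⟩ | ⟨_, hq'⟩⟩
          · exact hqv (hq' ▸ hv5)
          · exact hpv (hp' ▸ hv5)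
          · exact hqv (hq' ▸ hv5)
      refine ⟨ev, hv1, hv2, ?_, by rw [hdne ev hevk]; exact hv4,
        by rw [htne ev hevk, hhv]; exact hv5⟩
      rw [hhv]
      ext e
      rw [mem_incE]
      constructor
      · rintro ⟨heN, hinc⟩
        by_cases hek : e = k
        · exfalso
          rw [hek, htk, hhk] at hinc
          rcases hinc with h | h
          · exact hqv h
          · exact hzv h
        · rw [htne e hek, hhne e hek] at hinc
          have heold : e ∈ M.incE (M.head hi) :=
            mem_incE.mpr ⟨((hE' e).mp heN).1, hinc⟩
          rw [hv3] at heold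
          exact heold
      · intro h
        simp only [Finset.mem_insert, Finset.mem_singleton] at h
        rcases h with h | h | h
        · rw [h]
          exact ⟨(hE' hi).mpr ⟨P.hiE, hhid⟩, by
            rw [htne _ hhik, hhne _ hhik]; exact Or.inr rfl⟩
        · rw [h]
          exact ⟨(hE' he).mpr ⟨P.heE, hhed⟩, by
            rw [htne _ hhek, hhne _ hhek]; exact Or.inr P.heq⟩
        · rw [h]
          exact ⟨(hE' ev).mpr ⟨hevE, hevd⟩, by
            rw [htne _ hevk]; exact Or.inl hv5⟩

end Par

end Net
namespace Net

variable {n : ℕ}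

lemma suppress_eq_one (M : Net n) {p e : ℕ}
    (hsort : (M.incE p).sort (· ≤ ·) = [e]) :
    M.suppress p = { M with V := M.V.erase p, E := M.E.erase e } := by
  unfold Net.suppress
  rw [hsort]

lemma suppress_eq_big (M : Net n) {p : ℕ} (h3 : 3 ≤ (M.incE p).card) :
    M.suppress p = M := by
  have hl : 3 ≤ ((M.incE p).sort (· ≤ ·)).length := by
    rw [Finset.length_sort]; exact h3
  obtain ⟨a, l1, h1⟩ : ∃ a l1, (M.incE p).sort (· ≤ ·) = a :: l1 := by
    cases hs : (M.incE p).sort (· ≤ ·) with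
    | nil => rw [hs] at hl; simp at hl
    | cons a l => exact ⟨a, l, rfl⟩
  obtain ⟨b, l2, h2⟩ : ∃ b l2, l1 = b :: l2 := by
    cases hs : l1 with
    | nil => rw [h1, hs] at hl; simp at hl
    | cons b l => exact ⟨b, l, rfl⟩
  obtain ⟨c, l3, h3'⟩ : ∃ c l3, l2 = c :: l3 := by
    cases hs : l2 with
    | nil => rw [h1, h2, hs] at hl; simp at hl
    | cons c l => exact ⟨c, l, rfl⟩
  unfold Net.suppress
  rw [h1, h2, h3']

lemma suppress_eq_zero (M : Net n) {p : ℕ} (h0 : (M.incE p).card = 0) :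
    M.suppress p = M := by
  have hl : ((M.incE p).sort (· ≤ ·)).length = 0 := by
    rw [Finset.length_sort]; exact h0
  have : (M.incE p).sort (· ≤ ·) = [] := List.length_eq_zero_iff.mp hl
  unfold Net.suppress
  rw [this]

lemma suppress_eq_two (M : Net n) {p eL f3 q z c d : ℕ}
    (hsort : (M.incE p).sort (· ≤ ·) = [c, d])
    (hcd : ({c, d} : Finset ℕ) = ({eL, f3} : Finset ℕ)) (hcdne : c ≠ d)
    (hqp : q ≠ p)
    (hdL : M.dir eL = true) (htL : M.tail eL = p) (hhL : M.head eL = z)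
    (hf3 : (M.dir f3 = true ∧ M.head f3 = p ∧ M.tail f3 = q) ∨
      (M.dir f3 = false ∧ ((M.tail f3 = p ∧ M.head f3 = q) ∨ (M.head f3 = p ∧ M.tail f3 = q))))
    (hLf : eL ≠ f3) :
    M.suppress p = M.replaceEdge p c d q z true := by
  have hcm : c = eL ∨ c = f3 := by
    have : c ∈ ({eL, f3} : Finset ℕ) := hcd ▸ (by simp : c ∈ ({c, d} : Finset ℕ))
    simpa using this
  have hdm : d = eL ∨ d = f3 := by
    have : d ∈ ({eL, f3} : Finset ℕ) := hcd ▸ (by simp : d ∈ ({c, d} : Finset ℕ))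
    simpa using this
  have ho3 : (if M.tail f3 = p then M.head f3 else M.tail f3) = q := by
    rcases hf3 with ⟨_, hp', hq'⟩ | ⟨_, ⟨hp', hq'⟩ | ⟨hp', hq'⟩⟩
    · rw [if_neg (by rw [hq']; exact hqp), hq']
    · rw [if_pos hp', hq']
    · rw [if_neg (by rw [hq']; exact hqp), hq']
  have hoL : (if M.tail eL = p then M.head eL else M.tail eL) = z := by
    rw [if_pos htL, hhL]
  have hf3notout : ¬ (M.dir f3 = true ∧ M.tail f3 = p) := by
    rcases hf3 with ⟨_, _, hq'⟩ | ⟨hd', _⟩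
    · rintro ⟨_, ht'⟩
      exact hqp (hq' ▸ ht')
    · rintro ⟨hd2, _⟩
      rw [hd'] at hd2
      exact Bool.noConfusion hd2
  unfold Net.suppress
  rw [hsort]
  rcases hcm with rfl | rfl
  · -- c = eL, so d = f3
    have hd3 : d = f3 := by
      rcases hdm with h | h
      · exact absurd h.symm hcdne
      · exact h
    subst hd3
    simp only [ho3, hoL]
    rw [if_pos ⟨hdL, htL⟩]
  · -- c = f3, d = eL
    have hd3 : d = eL := by
      rcases hdm with h | h
      · exact h
      · exact absurd h.symm hcdne
    subst hd3
    simp only [ho3, hoL]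
    rw [if_neg hf3notout, if_pos ⟨hdL, htL⟩]

end Net
namespace Net

variable {n : ℕ}

lemma card_incE_eq_deg {M : Net n} (noloop : ∀ e ∈ M.E, M.tail e ≠ M.head e) (w : ℕ) :
    (M.incE w).card = M.deg w := by
  classical
  have hU : M.incE w =
      (M.E.filter (fun e => M.dir e = true ∧ M.head e = w) ∪
        M.E.filter (fun e => M.dir e = true ∧ M.tail e = w)) ∪
      M.E.filter (fun e => M.dir e = false ∧ (M.tail e = w ∨ M.head e = w)) := by
    ext e
    simp only [Net.incE, Finset.mem_filter, Finset.mem_union]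
    constructor
    · rintro ⟨hE, h⟩
      by_cases hd : M.dir e = true
      · rcases h with h | h
        · exact Or.inl (Or.inr ⟨hE, hd, h⟩)
        · exact Or.inl (Or.inl ⟨hE, hd, h⟩)
      · exact Or.inr ⟨hE, by simpa using hd, h⟩
    · rintro ((⟨hE, _, h⟩ | ⟨hE, _, h⟩) | ⟨hE, _, h⟩)
      · exact ⟨hE, Or.inr h⟩
      · exact ⟨hE, Or.inl h⟩
      · exact ⟨hE, h⟩
  have hd1 : Disjoint (M.E.filter (fun e => M.dir e = true ∧ M.head e = w))
      (M.E.filter (fun e => M.dir e = true ∧ M.tail e = w)) := by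
    rw [Finset.disjoint_left]
    intro e h1 h2
    simp only [Finset.mem_filter] at h1 h2
    exact noloop e h1.1 (h2.2.2.trans h1.2.2.symm)
  have hd2 : Disjoint ((M.E.filter (fun e => M.dir e = true ∧ M.head e = w)) ∪
      (M.E.filter (fun e => M.dir e = true ∧ M.tail e = w)))
      (M.E.filter (fun e => M.dir e = false ∧ (M.tail e = w ∨ M.head e = w))) := by
    rw [Finset.disjoint_left]
    intro e h1 h2
    simp only [Finset.mem_filter, Finset.mem_union] at h1 h2
    rcases h1 with h | h <;> rw [h.2.1] at h2 <;> simp at h2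
  rw [hU, Finset.card_union_of_disjoint hd2, Finset.card_union_of_disjoint hd1]
  rfl

lemma pair_of_card_two {s : Finset ℕ} {a : ℕ} (h : s.card = 2) (ha : a ∈ s) :
    ∃ b, a ≠ b ∧ s = {a, b} := by
  obtain ⟨c, d, hcd, _, hs⟩ := sort_card_two h
  subst hs
  simp only [Finset.mem_insert, Finset.mem_singleton] at ha
  rcases ha with rfl | rfl
  · exact ⟨d, hcd, rfl⟩
  · exact ⟨c, fun hc => hcd hc.symm, by rw [Finset.pair_comm]⟩

/-- Extract the shape of the second edge at a degree-2 non-root node. -/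
lemma deg2_shape {M : Net n} (noloop : ∀ e ∈ M.E, M.tail e ≠ M.head e)
    {p epy y : ℕ} (hpV : p ∈ M.V) (hcard : (M.incE p).card = 2)
    (hepyE : epy ∈ M.E) (hdy : M.dir epy = true) (hty : M.tail epy = p) (hhy : M.head epy = y)
    (hnroot : ¬ M.IsRootNode p) :
    ∃ f3 q, epy ≠ f3 ∧ M.incE p = {epy, f3} ∧ f3 ∈ M.E ∧
      ((M.dir f3 = true ∧ M.head f3 = p ∧ M.tail f3 = q) ∨
        (M.dir f3 = false ∧ ((M.tail f3 = p ∧ M.head f3 = q) ∨ (M.head f3 = p ∧ M.tail f3 = q)))) := by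
  obtain ⟨f3, hne, hpair⟩ := pair_of_card_two hcard (mem_incE.mpr ⟨hepyE, Or.inl hty⟩)
  have hf3E : f3 ∈ M.E := incE_subset (by rw [hpair]; simp)
  have hf3inc : M.tail f3 = p ∨ M.head f3 = p :=
    (mem_incE.mp (show f3 ∈ M.incE p by rw [hpair]; simp)).2
  -- p has an in- or undirected edge
  have hex : ∃ g ∈ M.E, (M.dir g = true ∧ M.head g = p) ∨
      (M.dir g = false ∧ (M.tail g = p ∨ M.head g = p)) := by
    by_contra hcon
    push_neg at hcon
    apply hnroot
    refine ⟨hpV, ?_, ?_⟩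
    · rw [Net.indeg, Finset.card_eq_zero, Finset.filter_eq_empty_iff]
      intro g hg
      intro hgg
      exact (hcon g hg).1 hgg.1 hgg.2
    · rw [Net.undeg, Finset.card_eq_zero, Finset.filter_eq_empty_iff]
      intro g hg
      intro hgg
      rcases hgg.2 with h | h
      · exact ((hcon g hg).2 hgg.1).1 h
      · exact ((hcon g hg).2 hgg.1).2 h
  obtain ⟨g, hgE, hg⟩ := hex
  have hginc : g ∈ M.incE p := by
    refine mem_incE.mpr ⟨hgE, ?_⟩
    rcases hg with ⟨_, h⟩ | ⟨_, h⟩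
    · exact Or.inr h
    · exact h
  have hgf3 : g = f3 := by
    rw [hpair] at hginc
    simp only [Finset.mem_insert, Finset.mem_singleton] at hginc
    rcases hginc with h | h
    · exfalso
      rcases hg with ⟨_, hh⟩ | ⟨hd', _⟩
      · exact noloop epy hepyE (hty.trans (h ▸ hh).symm)
      · rw [h, hdy] at hd'
        exact Bool.noConfusion hd'
    · exact h
  subst hgf3
  rcases hg with ⟨hd', hh'⟩ | ⟨hd', hor⟩
  · exact ⟨g, M.tail g, hne, hpair, hf3E, Or.inl ⟨hd', hh', rfl⟩⟩
  · rcases hor with h | h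
    · exact ⟨g, M.head g, hne, hpair, hf3E, Or.inr ⟨hd', Or.inl ⟨h, rfl⟩⟩⟩
    · exact ⟨g, M.tail g, hne, hpair, hf3E, Or.inr ⟨hd', Or.inr ⟨h, rfl⟩⟩⟩

namespace Par

variable {M : Net n} {hi he : ℕ}

/-- Suppressing a degree-1 node `p ∉ {u, v}` whose edge avoids `v` preserves `Par`. -/
lemma par_suppress1 (P : Par M hi he) {p e : ℕ} (hpu : p ≠ M.tail hi) (hpv : p ≠ M.head hi)
    (hlp : M.lbl p = none) (hincp : M.incE p = {e}) (henv : e ∉ M.incE (M.head hi)) :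
    Par (M.suppress p) hi he := by
  rw [suppress_eq_one M (by rw [hincp]; exact Finset.sort_singleton _ e)]
  have hehi : e ≠ hi := by
    intro hc
    exact P.hi_not_inc hpu hpv (hc ▸ (by rw [hincp]; simp : e ∈ M.incE p))
  have hehe : e ≠ he := by
    intro hc
    exact P.he_not_inc hpu hpv (hc ▸ (by rw [hincp]; simp : e ∈ M.incE p))
  have hnotp : ∀ f ∈ M.E, f ≠ e → M.tail f ≠ p ∧ M.head f ≠ p := by
    intro f hfE hfe
    have : f ∉ M.incE p := by rw [hincp]; simpa using hfe
    exact ⟨fun hc => this (mem_incE.mpr ⟨hfE, Or.inl hc⟩),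
      fun hc => this (mem_incE.mpr ⟨hfE, Or.inr hc⟩)⟩
  refine ⟨?_, ?_, P.hne, P.dhi, P.dhe, P.teq, P.heq, ?_, ?_, ?_, ?_, ?_, ?_, ?_, ?_, ?_, ?_,
    ?_, ?_⟩
  · exact Finset.mem_erase.mpr ⟨hehi.symm ∘ Eq.symm ∘ Eq.symm, P.hiE⟩
  · exact Finset.mem_erase.mpr ⟨fun hc => hehe hc.symm, P.heE⟩
  · exact Finset.mem_erase.mpr ⟨fun hc => hpu hc.symm, P.tV⟩
  · exact Finset.mem_erase.mpr ⟨fun hc => hpv hc.symm, P.hV⟩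
  · intro f hf; exact P.noloop f (Finset.mem_of_mem_erase hf)
  · intro f hf
    have hf' := Finset.mem_erase.mp hf
    exact Finset.mem_erase.mpr ⟨(hnotp f hf'.2 hf'.1).1, P.wfT f hf'.2⟩
  · intro f hf
    have hf' := Finset.mem_erase.mp hf
    exact Finset.mem_erase.mpr ⟨(hnotp f hf'.2 hf'.1).2, P.wfH f hf'.2⟩
  · intro z hz hl f hf
    exact P.leafO z (Finset.mem_of_mem_erase hz) hl f (Finset.mem_of_mem_erase hf)
  · intro z hz hl f hf
    exact P.leafU z (Finset.mem_of_mem_erase hz) hl f (Finset.mem_of_mem_erase hf)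
  · intro z hz hl f hf g hg
    exact P.leafI z (Finset.mem_of_mem_erase hz) hl f (Finset.mem_of_mem_erase hf) g
      (Finset.mem_of_mem_erase hg)
  · intro z hz
    by_cases hzp : z = p
    · exact hzp ▸ hlp
    · exact P.lblNotV z (fun hc => hz (Finset.mem_erase.mpr ⟨hzp, hc⟩))
  · intro z hz w hw
    exact P.inj z (Finset.mem_of_mem_erase hz) w (Finset.mem_of_mem_erase hw)
  · refine le_trans (Finset.card_le_card ?_) P.ucard
    intro f hf
    rw [mem_incE] at hf ⊢
    exact ⟨Finset.mem_of_mem_erase hf.1, hf.2⟩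
  · obtain ⟨ev, hv1, hv2, hv3, hv4, hv5⟩ := P.hv
    refine ⟨ev, hv1, hv2, ?_, hv4, hv5⟩
    ext f
    rw [mem_incE]
    constructor
    · rintro ⟨hfE, hfi⟩
      have : f ∈ M.incE (M.head hi) := mem_incE.mpr ⟨Finset.mem_of_mem_erase hfE, hfi⟩
      rw [hv3] at this
      exact this
    · intro hf
      have hf' : f ∈ M.incE (M.head hi) := hv3 ▸ hf
      have hfe : f ≠ e := by
        intro hc
        exact henv (hc ▸ hf')
      rw [mem_incE] at hf'
      exact ⟨Finset.mem_erase.mpr ⟨hfe, hf'.1⟩, hf'.2⟩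

/-- Suppressing a degree-2 node `p ∉ {u, v}` with an out-edge to a labelled node `z`
and an in-or-undirected second edge preserves `Par`. -/
lemma par_suppress2 (P : Par M hi he) {p eL f3 q z : ℕ}
    (hpu : p ≠ M.tail hi) (hpv : p ≠ M.head hi) (hlp : M.lbl p = none)
    (hLf : eL ≠ f3) (hincp : M.incE p = {eL, f3})
    (heLE : eL ∈ M.E) (hdL : M.dir eL = true) (htL : M.tail eL = p) (hhL : M.head eL = z)
    (hf3E : f3 ∈ M.E)
    (hf3 : (M.dir f3 = true ∧ M.head f3 = p ∧ M.tail f3 = q) ∨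
      (M.dir f3 = false ∧ ((M.tail f3 = p ∧ M.head f3 = q) ∨ (M.head f3 = p ∧ M.tail f3 = q))))
    (hzlab : (M.lbl z).isSome) :
    Par (M.suppress p) hi he := by
  have hqp : q ≠ p := by
    rcases hf3 with ⟨_, hp', hq⟩ | ⟨_, ⟨hp', hq⟩ | ⟨hp', hq⟩⟩
    · exact fun hc => P.noloop f3 hf3E ((hq.trans hc).trans hp'.symm)
    · exact fun hc => P.noloop f3 hf3E (hp'.trans ((hq.trans hc).symm))
    · exact fun hc => P.noloop f3 hf3E ((hq.trans hc).trans hp'.symm)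
  have hcard : (M.incE p).card = 2 := by
    rw [hincp]
    exact Finset.card_pair hLf
  obtain ⟨c, d, hcd, hsort, hset⟩ := sort_card_two hcard
  have hkd : ({c, d} : Finset ℕ) = ({eL, f3} : Finset ℕ) := by rw [← hset, hincp]
  rw [suppress_eq_two M hsort hkd hcd hqp hdL htL hhL hf3 hLf]
  exact P.par_shape hpu hpv hlp hincp heLE hdL htL hhL hf3E hf3 hzlab hkd hcd

end Par

end Net
variable {n : ℕ}

/-- The target configuration: the `N_2` component containing `hi`, `he`. -/
def Config (M : Net n) (hi he : ℕ) : Prop :=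
  ∃ u v x y e1 e2 : ℕ,
    ([u, v, x, y] : List ℕ).Nodup ∧
    u ∈ M.V ∧ v ∈ M.V ∧ x ∈ M.V ∧ y ∈ M.V ∧
    ([hi, he, e1, e2] : List ℕ).Nodup ∧
    hi ∈ M.E ∧ he ∈ M.E ∧ e1 ∈ M.E ∧ e2 ∈ M.E ∧
    M.dir hi = true ∧ M.tail hi = u ∧ M.head hi = v ∧
    M.dir he = true ∧ M.tail he = u ∧ M.head he = v ∧
    M.dir e1 = true ∧ M.tail e1 = u ∧ M.head e1 = y ∧
    M.dir e2 = true ∧ M.tail e2 = v ∧ M.head e2 = x ∧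
    (M.lbl x).isSome ∧ (M.lbl y).isSome ∧
    (∀ e ∈ M.E,
      (M.tail e = u ∨ M.tail e = v ∨ M.tail e = x ∨ M.tail e = y ∨
        M.head e = u ∨ M.head e = v ∨ M.head e = x ∨ M.head e = y) →
      e = hi ∨ e = he ∨ e = e1 ∨ e = e2)

lemma nodup4 {a b c d : ℕ} (h1 : a ≠ b) (h2 : a ≠ c) (h3 : a ≠ d) (h4 : b ≠ c)
    (h5 : b ≠ d) (h6 : c ≠ d) : ([a, b, c, d] : List ℕ).Nodup := by
  simp [h1, h2, h3, h4, h5, h6]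

namespace Net

set_option maxHeartbeats 2000000 in
/-- The tree-cherry step preserves the invariant. -/
lemma par_treeStep {M : Net n} {hi he : ℕ} (P : Par M hi he) {a b : Fin n}
    (hT : M.TreeCherry a b) : Par (M.reduceTree a b) hi he := by
  obtain ⟨x, y, p, hax, hby, hxy, hpx, hpy⟩ := hT
  obtain ⟨ex, hexE, hdx, htx, hhx⟩ := hpx
  obtain ⟨ey, heyE, hdy, hty, hhy⟩ := hpy
  have hxs : (M.lbl x).isSome := by rw [hax.2]; rfl
  have hys : (M.lbl y).isSome := by rw [hby.2]; rfl
  have hxu : x ≠ M.tail hi := P.lab_ne_u hxs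
  have hxv : x ≠ M.head hi := P.lab_ne_v hxs
  have hyu : y ≠ M.tail hi := P.lab_ne_u hys
  have hyv : y ≠ M.head hi := P.lab_ne_v hys
  have hexhi : ex ≠ hi := by
    intro hc; rw [hc] at hhx; exact hxv hhx.symm
  have hexhe : ex ≠ he := by
    intro hc; rw [hc, P.heq] at hhx; exact hxv hhx.symm
  have heyhi : ey ≠ hi := by
    intro hc; rw [hc] at hhy; exact hyv hhy.symm
  have heyhe : ey ≠ he := by
    intro hc; rw [hc, P.heq] at hhy; exact hyv hhy.symm
  have hexey : ex ≠ ey := by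
    intro hc; rw [hc, hhy] at hhx; exact hxy hhx.symm
  have hpV : p ∈ M.V := htx ▸ P.wfT ex hexE
  have hpunlab : M.lbl p = none := by
    by_cases h : (M.lbl p).isSome
    · exact absurd ⟨hdx, htx⟩ (P.leafO p hpV h ex hexE)
    · exact Option.not_isSome_iff_eq_none.mp h
  have hxp : x ≠ p := fun hc => by rw [hc, hpunlab] at hxs; exact Bool.noConfusion hxs
  have hyp : y ≠ p := fun hc => by rw [hc, hpunlab] at hys; exact Bool.noConfusion hys
  have hpu : p ≠ M.tail hi := by
    intro hc
    have hsub : ({hi, he, ex, ey} : Finset ℕ) ⊆ M.incE (M.tail hi) := by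
      intro g hg
      simp only [Finset.mem_insert, Finset.mem_singleton] at hg
      rcases hg with rfl | rfl | rfl | rfl
      · exact P.hi_mem_incE_u
      · exact P.he_mem_incE_u
      · exact mem_incE.mpr ⟨hexE, Or.inl (htx.trans hc)⟩
      · exact mem_incE.mpr ⟨heyE, Or.inl (hty.trans hc)⟩
    have hc4 := Finset.card_le_card hsub
    rw [card_four P.hne hexhi.symm heyhi.symm hexhe.symm heyhe.symm hexey] at hc4
    have := P.ucard
    omega
  have hpv : p ≠ M.head hi := by
    intro hc
    obtain ⟨ev, hv1, hv2, hv3, hv4, hv5⟩ := P.hv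
    have h1 : ex ∈ M.incE (M.head hi) := mem_incE.mpr ⟨hexE, Or.inl (htx.trans hc)⟩
    have h2 : ey ∈ M.incE (M.head hi) := mem_incE.mpr ⟨heyE, Or.inl (hty.trans hc)⟩
    rw [hv3] at h1 h2
    simp only [Finset.mem_insert, Finset.mem_singleton] at h1 h2
    rcases h1 with h1 | h1 | h1
    · exact hexhi h1
    · exact hexhe h1
    · rcases h2 with h2 | h2 | h2
      · exact heyhi h2
      · exact heyhe h2
      · exact hexey (h1.trans h2.symm)
  have hlabA : M.labelNode a = x := P.labelNode_eq hax.1 hax.2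
  have hparA : M.parentOf x = p := by
    rw [P.parentOf_eq hax.1 hxs hexE hdx hhx, htx]
  rw [Net.reduceTree]
  rw [hlabA, hparA]
  -- the deleted leaf
  have hP1 : Par (M.deleteLeaf x) hi he := by
    refine P.par_deleteLeaf hax.1 hxs ?_
    intro e heE hde hte hhe
    have hee : e = ex := P.leafI x hax.1 hxs e heE ex hexE hde hhe hdx hhx
    rw [hee] at hte
    exact hpv (htx.symm.trans hte)
  set N1 := M.deleteLeaf x with hN1
  have heyN1 : ey ∈ N1.E := by
    refine Finset.mem_sdiff.mpr ⟨heyE, ?_⟩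
    rw [mem_incE]
    rintro ⟨-, h | h⟩
    · exact hxp (by rw [← h, hty])
    · exact hxy (by rw [← h, hhy])
  have hpN1V : p ∈ N1.V := Finset.mem_erase.mpr ⟨fun hc => hxp hc.symm, hpV⟩
  rw [Net.suppressIf]
  by_cases hS : N1.Suppressible p
  · rw [if_pos hS]
    rcases hS.2 with ⟨hdeg2, hnroot⟩ | ⟨hdeg1, hroot, -⟩
    · -- degree 2
      have hcard : (N1.incE p).card = 2 := by
        rw [card_incE_eq_deg hP1.noloop p]; exact hdeg2
      obtain ⟨f3, q, hne3, hpair, hf3E, hsh⟩ :=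
        deg2_shape hP1.noloop hpN1V hcard heyN1 hdy hty hhy hnroot
      refine hP1.par_suppress2 hpu hpv hS.1 hne3 hpair heyN1 hdy hty hhy hf3E hsh ?_
      show (N1.lbl y).isSome
      have : N1.lbl y = M.lbl y := Function.update_of_ne hxy.symm _ _
      rw [this]
      exact hys
    · -- degree 1 (root)
      have hcard : (N1.incE p).card = 1 := by
        rw [card_incE_eq_deg hP1.noloop p]; exact hdeg1
      obtain ⟨e0, he0⟩ := Finset.card_eq_one.mp hcard
      have hmem : ey ∈ N1.incE p := mem_incE.mpr ⟨heyN1, Or.inl hty⟩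
      rw [he0] at hmem
      simp only [Finset.mem_singleton] at hmem
      rw [← hmem] at he0
      refine hP1.par_suppress1 hpu hpv hS.1 he0 ?_
      rw [mem_incE]
      rintro ⟨-, h | h⟩
      · exact hpv (hty.symm.trans h)
      · exact hyv (hhy.symm.trans h)
  · rw [if_neg hS]
    exact hP1

end Net
namespace Net

variable {n : ℕ}

/-- Final suppression of the hybrid parent `pa` preserves the invariant. -/
lemma par_finishPa {Q : Net n} {hi he pa epax x h0 : ℕ} (P2 : Par Q hi he)
    (hpau : pa ≠ Q.tail hi) (hpav : pa ≠ Q.head hi) (hlpa : Q.lbl pa = none)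
    (hepaxE : epax ∈ Q.E) (hdax : Q.dir epax = true) (htax : Q.tail epax = pa)
    (hhax : Q.head epax = x) (hxs : (Q.lbl x).isSome)
    (hh0E : h0 ∈ Q.E) (hdh0 : Q.dir h0 = true) (hhh0 : Q.head h0 = pa) :
    Par (Q.suppress pa) hi he := by
  have hne : epax ≠ h0 := by
    intro hc
    rw [hc, hhh0] at hhax
    rw [← hhax, hlpa] at hxs
    exact Bool.noConfusion hxs
  have h2le : 1 < (Q.incE pa).card := Finset.one_lt_card.mpr
    ⟨epax, mem_incE.mpr ⟨hepaxE, Or.inl htax⟩, h0, mem_incE.mpr ⟨hh0E, Or.inr hhh0⟩, hne⟩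
  by_cases hc2 : (Q.incE pa).card = 2
  · obtain ⟨bb, hneb, hpair⟩ := pair_of_card_two hc2 (mem_incE.mpr ⟨hepaxE, Or.inl htax⟩)
    have hbh0 : bb = h0 := by
      have : h0 ∈ Q.incE pa := mem_incE.mpr ⟨hh0E, Or.inr hhh0⟩
      rw [hpair] at this
      simp only [Finset.mem_insert, Finset.mem_singleton] at this
      rcases this with h | h
      · exact absurd h.symm hne
      · exact h.symm
    subst hbh0
    exact P2.par_suppress2 hpau hpav hlpa hneb hpair hepaxE hdax htax hhax hh0E
      (Or.inl ⟨hdh0, hhh0, rfl⟩) hxs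
  · rw [suppress_eq_big Q (by omega)]
    exact P2

set_option maxHeartbeats 4000000 in
/-- The reticulate-cherry step: either the configuration is present, or the
invariant is preserved. -/
lemma par_retStep {M : Net n} {hi he : ℕ} (P : Par M hi he) {a b : Fin n}
    (hR : M.RetCherry a b) : Config M hi he ∨ Par (M.reduceRet a b) hi he := by
  obtain ⟨x, y, pa, pb, hax, hby, hxy, hpax, hpaH, hpby, hpbpa⟩ := hR
  obtain ⟨epax, hepaxE, hdax, htax, hhax⟩ := hpax
  obtain ⟨e1, he1E, hd1, ht1, hh1⟩ := hpby
  obtain ⟨eint0, hint0E, hdint0, htint0, hhint0⟩ := hpbpa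
  have hxs : (M.lbl x).isSome := by rw [hax.2]; rfl
  have hys : (M.lbl y).isSome := by rw [hby.2]; rfl
  have hxu := P.lab_ne_u hxs
  have hxv := P.lab_ne_v hxs
  have hyu := P.lab_ne_u hys
  have hyv := P.lab_ne_v hys
  have hpaV : pa ∈ M.V := htax ▸ P.wfT epax hepaxE
  have hpbV : pb ∈ M.V := ht1 ▸ P.wfT e1 he1E
  have hpaunlab : M.lbl pa = none := by
    by_cases h : (M.lbl pa).isSome
    · exact absurd ⟨hdax, htax⟩ (P.leafO pa hpaV h epax hepaxE)
    · exact Option.not_isSome_iff_eq_none.mp h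
  have hpbunlab : M.lbl pb = none := by
    by_cases h : (M.lbl pb).isSome
    · exact absurd ⟨hd1, ht1⟩ (P.leafO pb hpbV h e1 he1E)
    · exact Option.not_isSome_iff_eq_none.mp h
  have hpapb : pb ≠ pa := fun hc => P.noloop eint0 hint0E (htint0.trans (hc.trans hhint0.symm))
  have hxpa : x ≠ pa := fun hc => by rw [hc, hpaunlab] at hxs; exact Bool.noConfusion hxs
  have hxpb : x ≠ pb := fun hc => by rw [hc, hpbunlab] at hxs; exact Bool.noConfusion hxs
  have hypa : y ≠ pa := fun hc => by rw [hc, hpaunlab] at hys; exact Bool.noConfusion hys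
  have hypb : y ≠ pb := fun hc => by rw [hc, hpbunlab] at hys; exact Bool.noConfusion hys
  have he1hi : e1 ≠ hi := fun hc => hyv (by rw [← hh1, hc])
  have he1he : e1 ≠ he := fun hc => hyv (by rw [← hh1, hc, P.heq])
  have hepaxe1 : epax ≠ e1 := fun hc => hxy (by rw [← hhax, hc, hh1])
  have he1int : e1 ≠ eint0 := fun hc => hypa (by rw [← hh1, hc, hhint0])
  have hpau : pa ≠ M.tail hi := fun hc => P.not_hybrid_u (hc ▸ hpaH)
  have hlabA : M.labelNode a = x := P.labelNode_eq hax.1 hax.2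
  have hlabB : M.labelNode b = y := P.labelNode_eq hby.1 hby.2
  have hparA : M.parentOf x = pa := by rw [P.parentOf_eq hax.1 hxs hepaxE hdax hhax, htax]
  have hparB : M.parentOf y = pb := by rw [P.parentOf_eq hby.1 hys he1E hd1 hh1, ht1]
  obtain ⟨ev, hv1, hv2, hv3, hv4, hv5⟩ := P.hv
  have hevE := P.evE hv3
  by_cases hcrit : pa = M.head hi
  · -- CRITICAL CASE: the configuration is present.
    left
    have hint0v : eint0 ∈ M.incE (M.head hi) :=
      mem_incE.mpr ⟨hint0E, Or.inr (hhint0.trans hcrit)⟩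
    rw [hv3] at hint0v
    simp only [Finset.mem_insert, Finset.mem_singleton] at hint0v
    have hpbu : pb = M.tail hi := by
      rcases hint0v with h | h | h
      · rw [← htint0, h]
      · rw [← htint0, h, P.teq]
      · exfalso
        apply hpapb
        rw [← htint0, h, hv5, ← hcrit]
    have hepaxv : epax = ev := by
      have hm : epax ∈ M.incE (M.head hi) := mem_incE.mpr ⟨hepaxE, Or.inl (htax.trans hcrit)⟩
      rw [hv3] at hm
      simp only [Finset.mem_insert, Finset.mem_singleton] at hm
      rcases hm with h | h | h
      · exfalso
        rw [h] at htax
        exact P.uv (htax.trans hcrit)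
      · exfalso
        rw [h] at htax
        rw [P.teq] at htax
        exact P.uv (htax.trans hcrit)
      · exact h
    have hepaxhi : epax ≠ hi := fun hc => hv1 (hc ▸ hepaxv.symm)
    have hepaxhe : epax ≠ he := fun hc => hv2 (hc ▸ hepaxv.symm)
    have hincu : M.incE (M.tail hi) = {hi, he, e1} := by
      refine (Finset.eq_of_subset_of_card_le ?_ ?_).symm
      · intro g hg
        simp only [Finset.mem_insert, Finset.mem_singleton] at hg
        rcases hg with rfl | rfl | rfl
        · exact P.hi_mem_incE_u
        · exact P.he_mem_incE_u
        · exact mem_incE.mpr ⟨he1E, Or.inl (ht1.trans hpbu)⟩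
      · rw [card_three P.hne he1hi.symm he1he.symm]
        exact P.ucard
    refine ⟨M.tail hi, M.head hi, x, y, e1, epax,
      nodup4 P.uv hxu.symm hyu.symm hxv.symm hyv.symm hxy,
      P.tV, P.hV, hax.1, hby.1,
      nodup4 P.hne he1hi.symm hepaxhi.symm he1he.symm hepaxhe.symm hepaxe1.symm,
      P.hiE, P.heE, he1E, hepaxE,
      P.dhi, rfl, rfl, P.dhe, P.teq, P.heq,
      hd1, ht1.trans hpbu, hh1,
      hdax, htax.trans hcrit, hhax,
      hxs, hys, ?_⟩
    intro e heE hor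
    rcases hor with h | h | h | h | h | h | h | h
    · have hm : e ∈ M.incE (M.tail hi) := mem_incE.mpr ⟨heE, Or.inl h⟩
      rw [hincu] at hm
      simp only [Finset.mem_insert, Finset.mem_singleton] at hm
      tauto
    · have hm : e ∈ M.incE (M.head hi) := mem_incE.mpr ⟨heE, Or.inl h⟩
      rw [hv3] at hm
      simp only [Finset.mem_insert, Finset.mem_singleton] at hm
      rcases hm with h' | h' | h'
      · exact Or.inl h'
      · exact Or.inr (Or.inl h')
      · exact Or.inr (Or.inr (Or.inr (h'.trans hepaxv.symm)))
    · exact Or.inr (Or.inr (Or.inr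
        (P.leaf_inc hax.1 hxs hepaxE hdax hhax e heE (Or.inl h))))
    · exact Or.inr (Or.inr (Or.inl
        (P.leaf_inc hby.1 hys he1E hd1 hh1 e heE (Or.inl h))))
    · have hm : e ∈ M.incE (M.tail hi) := mem_incE.mpr ⟨heE, Or.inr h⟩
      rw [hincu] at hm
      simp only [Finset.mem_insert, Finset.mem_singleton] at hm
      tauto
    · have hm : e ∈ M.incE (M.head hi) := mem_incE.mpr ⟨heE, Or.inr h⟩
      rw [hv3] at hm
      simp only [Finset.mem_insert, Finset.mem_singleton] at hm
      rcases hm with h' | h' | h'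
      · exact Or.inl h'
      · exact Or.inr (Or.inl h')
      · exact Or.inr (Or.inr (Or.inr (h'.trans hepaxv.symm)))
    · exact Or.inr (Or.inr (Or.inr
        (P.leaf_inc hax.1 hxs hepaxE hdax hhax e heE (Or.inr h))))
    · exact Or.inr (Or.inr (Or.inl
        (P.leaf_inc hby.1 hys he1E hd1 hh1 e heE (Or.inr h))))
  · -- NON-CRITICAL CASE
    right
    have hint0hi : eint0 ≠ hi := fun h => hcrit (by rw [← hhint0, h])
    have hint0he : eint0 ≠ he := fun h => hcrit (by rw [← hhint0, h, P.heq])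
    have hpbu : pb ≠ M.tail hi := by
      intro hc
      have hsub : ({hi, he, e1, eint0} : Finset ℕ) ⊆ M.incE (M.tail hi) := by
        intro g hg
        simp only [Finset.mem_insert, Finset.mem_singleton] at hg
        rcases hg with rfl | rfl | rfl | rfl
        · exact P.hi_mem_incE_u
        · exact P.he_mem_incE_u
        · exact mem_incE.mpr ⟨he1E, Or.inl (ht1.trans hc)⟩
        · exact mem_incE.mpr ⟨hint0E, Or.inl (htint0.trans hc)⟩
      have hc4 := Finset.card_le_card hsub
      rw [card_four P.hne he1hi.symm hint0hi.symm he1he.symm hint0he.symm he1int] at hc4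
      have := P.ucard
      omega
    have hpbv : pb ≠ M.head hi := by
      intro hc
      have h1 : e1 ∈ M.incE (M.head hi) := mem_incE.mpr ⟨he1E, Or.inl (ht1.trans hc)⟩
      have h2 : eint0 ∈ M.incE (M.head hi) := mem_incE.mpr ⟨hint0E, Or.inl (htint0.trans hc)⟩
      rw [hv3] at h1 h2
      simp only [Finset.mem_insert, Finset.mem_singleton] at h1 h2
      rcases h1 with h1 | h1 | h1
      · exact he1hi h1
      · exact he1he h1
      · rcases h2 with h2 | h2 | h2
        · exact hint0hi h2
        · exact hint0he h2
        · exact he1int (h1.trans h2.symm)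
    simp only [Net.reduceRet]
    rw [hlabA, hlabB, hparA, hparB]
    set F := M.E.filter (fun e => M.dir e = true ∧ M.tail e = pb ∧ M.head e = pa) with hF
    set eint := (F.sort (· ≤ ·)).headI with heint
    have hFne : eint0 ∈ F := by
      rw [hF, Finset.mem_filter]
      exact ⟨hint0E, hdint0, htint0, hhint0⟩
    have hsortne : F.sort (· ≤ ·) ≠ [] := by
      intro hc
      have : F.card = 0 := by rw [← Finset.length_sort (· ≤ ·), hc]; rfl
      rw [Finset.card_eq_zero] at this
      rw [this] at hFne
      simp at hFne
    have heintF : eint ∈ F := by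
      rw [← Finset.mem_sort (α := ℕ) (· ≤ ·)]
      exact headI_mem hsortne
    rw [hF, Finset.mem_filter] at heintF
    obtain ⟨heintE, hdint, htint, hhint⟩ := heintF
    have hinthi : eint ≠ hi := fun h => hcrit (by rw [← hhint, h])
    have hinthe : eint ≠ he := fun h => hcrit (by rw [← hhint, h, P.heq])
    have hintv : eint ∉ M.incE (M.head hi) := by
      rw [mem_incE]
      rintro ⟨-, h | h⟩
      · exact hpbv (htint.symm.trans h)
      · exact hcrit (hhint.symm.trans h)
    have hP1 : Par { M with E := M.E.erase eint } hi he := P.par_erase hinthi hinthe hintv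
    set N1 : Net n := { M with E := M.E.erase eint } with hN1
    -- a surviving in-edge of pa
    obtain ⟨h0, hh0E, hdh0, hhh0, hh0int⟩ :
        ∃ h0, h0 ∈ M.E ∧ M.dir h0 = true ∧ M.head h0 = pa ∧ h0 ≠ eint := by
      have h2 : 1 < (M.E.filter (fun e => M.dir e = true ∧ M.head e = pa)).card :=
        lt_of_lt_of_le one_lt_two hpaH
      obtain ⟨g1, hg1, g2, hg2, hgne⟩ := Finset.one_lt_card.mp h2
      rw [Finset.mem_filter] at hg1 hg2
      by_cases h : g1 = eint
      · exact ⟨g2, hg2.1, hg2.2.1, hg2.2.2, fun hc => hgne (h.trans hc.symm)⟩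
      · exact ⟨g1, hg1.1, hg1.2.1, hg1.2.2, h⟩
    have hepaxint : epax ≠ eint := fun h => hxpa (by rw [← hhax, h, hhint])
    have hepaxN1 : epax ∈ N1.E := Finset.mem_erase.mpr ⟨hepaxint, hepaxE⟩
    have hh0N1 : h0 ∈ N1.E := Finset.mem_erase.mpr ⟨hh0int, hh0E⟩
    have he1N1 : e1 ∈ N1.E :=
      Finset.mem_erase.mpr ⟨fun h => hypa (by rw [← hh1, h, hhint]), he1E⟩
    have hh0e1 : h0 ≠ e1 := fun h => hypa (by rw [← hh1, ← h, hhh0])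
    have hepaxpb : epax ∉ N1.incE pb := by
      rw [mem_incE]
      rintro ⟨-, h | h⟩
      · exact hpapb ((htax.symm.trans h).symm)
      · exact hxpb (hhax.symm.trans h)
    have hh0pb2 : M.head h0 ≠ y := fun h => hypa ((h.symm.trans hhh0).symm ▸ rfl)
    rw [Net.suppressIf]
    by_cases hS : N1.Suppressible pb
    · rw [if_pos hS]
      rcases hS.2 with ⟨hdeg2, hnroot⟩ | ⟨hdeg1, hroot, -⟩
      · -- degree 2 at pb
        have hcard : (N1.incE pb).card = 2 := by
          rw [card_incE_eq_deg hP1.noloop pb]; exact hdeg2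
        obtain ⟨f3, q, hne3, hpair, hf3E, hsh⟩ :=
          deg2_shape hP1.noloop (show pb ∈ N1.V from hpbV) hcard he1N1 hd1 ht1 hh1 hnroot
        have hqpb : q ≠ pb := by
          rcases hsh with ⟨_, hp', hq⟩ | ⟨_, ⟨hp', hq⟩ | ⟨hp', hq⟩⟩
          · exact fun hc => hP1.noloop f3 hf3E ((hq.trans hc).trans hp'.symm)
          · exact fun hc => hP1.noloop f3 hf3E (hp'.trans ((hq.trans hc).symm))
          · exact fun hc => hP1.noloop f3 hf3E ((hq.trans hc).trans hp'.symm)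
        have hcard2 : (N1.incE pb).card = 2 := hcard
        obtain ⟨c, d, hcd, hsort, hset⟩ := sort_card_two hcard2
        have hkd : ({c, d} : Finset ℕ) = ({e1, f3} : Finset ℕ) := by rw [← hset, hpair]
        have hsupp2 : N1.suppress pb = N1.replaceEdge pb c d q y true :=
          suppress_eq_two N1 hsort hkd hcd hqpb hd1 ht1 hh1 hsh hne3
        rw [hsupp2]
        have P2 : Par (N1.replaceEdge pb c d q y true) hi he := by
          refine hP1.par_shape hpbu hpbv hS.1 hpair he1N1 hd1 ht1 hh1 hf3E hsh ?_ hkd hcd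
          exact hys
        set N2 := N1.replaceEdge pb c d q y true with hN2
        have hepaxf3 : epax ≠ f3 := by
          intro hc
          apply hepaxpb
          rw [hpair, hc]
          simp
        have hepaxc : epax ≠ c := by
          intro hc
          apply hepaxpb
          rw [hpair, ← hkd, hc]
          simp
        have hepaxd : epax ≠ d := by
          intro hc
          apply hepaxpb
          rw [hpair, ← hkd, hc]
          simp
        have hh0f3 : h0 ≠ f3 := by
          intro hc
          rcases hsh with ⟨_, hp', _⟩ | ⟨hd', _⟩
          · exact hpapb (by rw [← hhh0, hc, hp'])
          · rw [hc, hd'] at hdh0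
            exact Bool.noConfusion hdh0
        have hh0c : h0 ≠ c := by
          intro hc
          have : h0 = e1 ∨ h0 = f3 := by
            have hm : h0 ∈ ({e1, f3} : Finset ℕ) := by rw [← hkd, hc]; simp
            simpa using hm
          rcases this with h | h
          · exact hh0e1 h
          · exact hh0f3 h
        have hh0d : h0 ≠ d := by
          intro hc
          have : h0 = e1 ∨ h0 = f3 := by
            have hm : h0 ∈ ({e1, f3} : Finset ℕ) := by rw [← hkd, hc]; simp
            simpa using hm
          rcases this with h | h
          · exact hh0e1 h
          · exact hh0f3 h
        have he1c : e1 = c ∨ e1 = d := by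
          have hm : e1 ∈ ({c, d} : Finset ℕ) := by rw [hkd]; simp
          simpa using hm
        have hhic : hi ≠ c := by
          intro hc
          apply hP1.hi_not_inc hpbu hpbv
          rw [hc] at *
          rw [hpair, ← hkd]
          simp
        have hhic2 : hi ≠ c := hhic
        refine par_finishPa (epax := epax) (x := x) (h0 := h0) P2 ?_ ?_ ?_ ?_ ?_ ?_ ?_ ?_ ?_ ?_ ?_
        · show pa ≠ N2.tail hi
          rw [show N2.tail hi = N1.tail hi from by
            simp [hN2, Net.replaceEdge, Function.update_of_ne hhic]]
          exact hpau
        · show pa ≠ N2.head hi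
          rw [show N2.head hi = N1.head hi from by
            simp [hN2, Net.replaceEdge, Function.update_of_ne hhic]]
          exact hcrit
        · show N2.lbl pa = none
          exact hpaunlab
        · show epax ∈ N2.E
          simp only [hN2, Net.replaceEdge]
          exact Finset.mem_erase.mpr ⟨hepaxd, hepaxN1⟩
        · show N2.dir epax = true
          simp [hN2, Net.replaceEdge, Function.update_of_ne hepaxc]
          exact hdax
        · show N2.tail epax = pa
          simp only [hN2, Net.replaceEdge]
          rw [Function.update_of_ne hepaxc]
          exact htax
        · show N2.head epax = x
          simp only [hN2, Net.replaceEdge]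
          rw [Function.update_of_ne hepaxc]
          exact hhax
        · show (N2.lbl x).isSome
          exact hxs
        · show h0 ∈ N2.E
          simp only [hN2, Net.replaceEdge]
          exact Finset.mem_erase.mpr ⟨hh0d, hh0N1⟩
        · show N2.dir h0 = true
          simp only [hN2, Net.replaceEdge]
          rw [Function.update_of_ne hh0c]
          exact hdh0
        · show N2.head h0 = pa
          simp only [hN2, Net.replaceEdge]
          rw [Function.update_of_ne hh0c]
          exact hhh0
      · -- degree 1 at pb
        have hcard : (N1.incE pb).card = 1 := by
          rw [card_incE_eq_deg hP1.noloop pb]; exact hdeg1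
        obtain ⟨e0, he0⟩ := Finset.card_eq_one.mp hcard
        have hmem : e1 ∈ N1.incE pb := mem_incE.mpr ⟨he1N1, Or.inl ht1⟩
        rw [he0] at hmem
        simp only [Finset.mem_singleton] at hmem
        rw [← hmem] at he0
        have hsupp1 : N1.suppress pb = { N1 with V := N1.V.erase pb, E := N1.E.erase e1 } :=
          suppress_eq_one N1 (by rw [he0]; exact Finset.sort_singleton _ e1)
        rw [hsupp1]
        have P2 : Par { N1 with V := N1.V.erase pb, E := N1.E.erase e1 } hi he := by
          have := hP1.par_suppress1 hpbu hpbv hS.1 he0 (by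
            rw [mem_incE]
            rintro ⟨-, h | h⟩
            · exact hpbv (ht1.symm.trans h)
            · exact hyv (hh1.symm.trans h))
          rw [hsupp1] at this
          exact this
        refine par_finishPa P2 hpau hcrit hpaunlab ?_ hdax htax hhax hxs ?_ hdh0 hhh0
        · exact Finset.mem_erase.mpr ⟨hepaxe1, hepaxN1⟩
        · exact Finset.mem_erase.mpr ⟨hh0e1, hh0N1⟩
    · rw [if_neg hS]
      exact par_finishPa hP1 hpau hcrit hpaunlab hepaxN1 hdax htax hhax hxs hh0N1 hdh0 hhh0

end Net
namespace Net

variable {n : ℕ}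

lemma noloop_of_acyclic {M : Net n} (hac : M.Acyclic) : ∀ e ∈ M.E, M.tail e ≠ M.head e := by
  intro e heE hc
  apply hac [(e, true)]
  refine ⟨M.tail e, by simp, ⟨⟨heE, fun _ => rfl, ?_⟩, ?_⟩, by simp, by simp⟩
  · simp [Net.src]
  · show M.chain (M.dst (e, true)) [] (M.tail e)
    show M.dst (e, true) = M.tail e
    simp [Net.dst]
    exact hc.symm

lemma no_parallel_mixed {M : Net n} (hac : M.Acyclic) {e f : ℕ} (hef : e ≠ f)
    (heE : e ∈ M.E) (hfE : f ∈ M.E) (ht : M.tail e = M.tail f) (hh : M.head e = M.head f)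
    (hloop : M.tail e ≠ M.head e) (hdf : M.dir f = false) : False := by
  apply hac [(e, true), (f, false)]
  refine ⟨M.tail e, by simp, ⟨⟨heE, fun _ => rfl, by simp [Net.src]⟩, ?_⟩, ?_, by simp [hef]⟩
  · show M.chain (M.dst (e, true)) [(f, false)] (M.tail e)
    have hdst : M.dst (e, true) = M.head e := by simp [Net.dst]
    rw [hdst]
    refine ⟨⟨hfE, ?_, ?_⟩, ?_⟩
    · intro hdd; rw [hdf] at hdd; exact absurd hdd (by simp)
    · simp [Net.src]; exact hh.symm
    · show M.dst (f, false) = M.tail e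
      simp [Net.dst]
      exact ht.symm
  · show ([(e, true), (f, false)].map M.dst).Nodup
    have h1 : M.dst (e, true) = M.head e := by simp [Net.dst]
    have h2 : M.dst (f, false) = M.tail f := by simp [Net.dst]
    simp [h1, h2, ← ht]
    exact fun hc => hloop hc.symm

set_option maxHeartbeats 1000000 in
/-- The invariant holds initially for a good network with parallel edges. -/
lemma par_init {M : Net n} {hi he : ℕ} (hG : M.Good) (hne : hi ≠ he)
    (hiE : hi ∈ M.E) (heE : he ∈ M.E)
    (hsame : M.tail hi = M.tail he ∧ M.head hi = M.head he) :
    Par M hi he := by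
  obtain ⟨hL, hB, hC⟩ := hG
  have noloop : ∀ e ∈ M.E, M.tail e ≠ M.head e := noloop_of_acyclic hL.acyclic
  have hdhe : M.dir he = true := by
    by_contra h
    exact no_parallel_mixed hL.acyclic hne hiE heE hsame.1 hsame.2 (noloop hi hiE)
      (by simpa using h)
  have hdhi : M.dir hi = true := by
    by_contra h
    exact no_parallel_mixed hL.acyclic hne.symm heE hiE hsame.1.symm hsame.2.symm
      (noloop he heE) (by simpa using h)
  have huV : M.tail hi ∈ M.V := hL.wfT hi hiE
  have hvV : M.head hi ∈ M.V := hL.wfH hi hiE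
  have leafO : ∀ z ∈ M.V, (M.lbl z).isSome → ∀ e ∈ M.E, ¬(M.dir e = true ∧ M.tail e = z) := by
    intro z hz hl e heM hcon
    have hleaf := (hL.lblLeaf z hz).mp hl
    have hout := hleaf.2.1
    rw [Net.outdeg, Finset.card_eq_zero] at hout
    have hmem : e ∈ M.E.filter (fun g => M.dir g = true ∧ M.tail g = z) :=
      Finset.mem_filter.mpr ⟨heM, hcon⟩
    rw [hout] at hmem
    simp at hmem
  have leafU : ∀ z ∈ M.V, (M.lbl z).isSome →
      ∀ e ∈ M.E, ¬(M.dir e = false ∧ (M.tail e = z ∨ M.head e = z)) := by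
    intro z hz hl e heM hcon
    have hleaf := (hL.lblLeaf z hz).mp hl
    have hund := hleaf.2.2
    rw [Net.undeg, Finset.card_eq_zero] at hund
    have hmem : e ∈ M.E.filter (fun g => M.dir g = false ∧ (M.tail g = z ∨ M.head g = z)) :=
      Finset.mem_filter.mpr ⟨heM, hcon⟩
    rw [hund] at hmem
    simp at hmem
  have leafI : ∀ z ∈ M.V, (M.lbl z).isSome → ∀ e ∈ M.E, ∀ f ∈ M.E,
      M.dir e = true → M.head e = z → M.dir f = true → M.head f = z → e = f := by
    intro z hz hl e heM f hfM hde hhe hdf hhf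
    by_contra hef
    have htree := hL.leavesTree z ((hL.lblLeaf z hz).mp hl)
    rw [Net.IsTreeNode, Net.indeg] at htree
    have hsub : ({e, f} : Finset ℕ) ⊆ M.E.filter (fun g => M.dir g = true ∧ M.head g = z) := by
      intro g hg
      simp only [Finset.mem_insert, Finset.mem_singleton] at hg
      rcases hg with rfl | rfl
      · exact Finset.mem_filter.mpr ⟨heM, hde, hhe⟩
      · exact Finset.mem_filter.mpr ⟨hfM, hdf, hhf⟩
    have := Finset.card_le_card hsub
    rw [Finset.card_pair hef] at this
    omega
  -- structure at v
  have hisub : ({hi, he} : Finset ℕ) ⊆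
      M.E.filter (fun e => M.dir e = true ∧ M.head e = M.head hi) := by
    intro g hg
    simp only [Finset.mem_insert, Finset.mem_singleton] at hg
    rcases hg with rfl | rfl
    · exact Finset.mem_filter.mpr ⟨hiE, hdhi, rfl⟩
    · exact Finset.mem_filter.mpr ⟨heE, hdhe, hsame.2.symm⟩
  have hin2 : 2 ≤ M.indeg (M.head hi) := by
    rw [Net.indeg]
    calc (2 : ℕ) = ({hi, he} : Finset ℕ).card := (Finset.card_pair hne).symm
      _ ≤ _ := Finset.card_le_card hisub
  have hnotleaf : ¬ M.IsLeafNode (M.head hi) := by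
    intro hlf
    have := hL.leavesTree _ hlf
    rw [Net.IsTreeNode] at this
    omega
  have hnotroot : ¬ M.IsRootNode (M.head hi) := by
    intro hr
    have := hr.2.1
    omega
  have hdeg3 : M.deg (M.head hi) = 3 := (hB _ hvV).2.2 hnotroot hnotleaf
  have hund0 : M.undeg (M.head hi) = 0 := by
    by_contra h
    have hpos : 0 < M.undeg (M.head hi) := Nat.pos_of_ne_zero h
    rw [Net.undeg] at hpos
    obtain ⟨e0, he0⟩ := Finset.card_pos.mp hpos
    rw [Finset.mem_filter] at he0
    obtain ⟨he0E, hd0, hor⟩ := he0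
    have hnt : ¬ M.TrivialClass (M.head hi) := by
      intro htr
      rcases hor with h1 | h1
      · have hst : M.ustep (M.head hi) (M.head e0) := ⟨e0, he0E, hd0, Or.inl ⟨h1, rfl⟩⟩
        have := htr _ (Relation.ReflTransGen.single hst)
        exact noloop e0 he0E (by rw [h1, ← this])
      · have hst : M.ustep (M.head hi) (M.tail e0) := ⟨e0, he0E, hd0, Or.inr ⟨rfl, h1⟩⟩
        have := htr _ (Relation.ReflTransGen.single hst)
        exact noloop e0 he0E (this.trans h1.symm)
    exact hC.2 _ hvV hnt hi hiE hdhi Relation.ReflTransGen.refl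
  have hdegsum : M.indeg (M.head hi) + M.outdeg (M.head hi) + M.undeg (M.head hi) = 3 := hdeg3
  have hout1 : M.outdeg (M.head hi) = 1 := by
    by_cases h : M.outdeg (M.head hi) = 0
    · exact absurd ⟨hvV, h, hund0⟩ hnotleaf
    · omega
  have hin2' : M.indeg (M.head hi) = 2 := by omega
  have hinset : M.E.filter (fun e => M.dir e = true ∧ M.head e = M.head hi) = {hi, he} := by
    refine (Finset.eq_of_subset_of_card_le hisub ?_).symm
    rw [Finset.card_pair hne]
    exact le_of_eq hin2'
  rw [Net.outdeg] at hout1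
  obtain ⟨ev, hevset⟩ := Finset.card_eq_one.mp hout1
  have hevmem : ev ∈ M.E.filter (fun e => M.dir e = true ∧ M.tail e = M.head hi) := by
    rw [hevset]; simp
  rw [Finset.mem_filter] at hevmem
  obtain ⟨hevE, hdev, htev⟩ := hevmem
  have hevhi : ev ≠ hi := by
    intro hc
    rw [hc] at htev
    exact noloop hi hiE htev
  have hevhe : ev ≠ he := by
    intro hc
    rw [hc] at htev
    exact noloop hi hiE (hsame.1.trans htev)
  refine ⟨hiE, heE, hne, hdhi, hdhe, hsame.1.symm, hsame.2.symm, huV, hvV, noloop,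
    hL.wfT, hL.wfH, leafO, leafU, leafI, hL.lblV, hL.lblInj, ?_, ev, hevhi, hevhe, ?_,
    hdev, htev⟩
  · -- ucard
    rw [card_incE_eq_deg noloop]
    by_cases hr : M.IsRootNode (M.tail hi)
    · rcases (hB _ huV).1 hr with h | h | h <;> omega
    · by_cases hlf : M.IsLeafNode (M.tail hi)
      · exfalso
        have hout := hlf.2.1
        rw [Net.outdeg, Finset.card_eq_zero] at hout
        have hmem : hi ∈ M.E.filter (fun g => M.dir g = true ∧ M.tail g = M.tail hi) :=
          Finset.mem_filter.mpr ⟨hiE, hdhi, rfl⟩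
        rw [hout] at hmem
        simp at hmem
      · exact le_of_eq ((hB _ huV).2.2 hr hlf)
  · -- incE v = {hi, he, ev}
    ext e
    rw [mem_incE]
    constructor
    · rintro ⟨heM, h | h⟩
      · by_cases hd : M.dir e = true
        · have : e ∈ M.E.filter (fun g => M.dir g = true ∧ M.tail g = M.head hi) :=
            Finset.mem_filter.mpr ⟨heM, hd, h⟩
          rw [hevset] at this
          simp only [Finset.mem_singleton] at this
          simp [this]
        
        · exfalso
          have hu0 := hund0
          rw [Net.undeg, Finset.card_eq_zero] at hu0
          have hmem : e ∈ M.E.filter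
              (fun g => M.dir g = false ∧ (M.tail g = M.head hi ∨ M.head g = M.head hi)) :=
            Finset.mem_filter.mpr ⟨heM, by simpa using hd, Or.inl h⟩
          rw [hu0] at hmem
          simp at hmem
      · by_cases hd : M.dir e = true
        · have : e ∈ M.E.filter (fun g => M.dir g = true ∧ M.head g = M.head hi) :=
            Finset.mem_filter.mpr ⟨heM, hd, h⟩
          rw [hinset] at this
          simp only [Finset.mem_insert, Finset.mem_singleton] at this
          rcases this with h2 | h2 <;> simp [h2]
        · exfalso
          have hu0 := hund0
          rw [Net.undeg, Finset.card_eq_zero] at hu0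
          have hmem : e ∈ M.E.filter
              (fun g => M.dir g = false ∧ (M.tail g = M.head hi ∨ M.head g = M.head hi)) :=
            Finset.mem_filter.mpr ⟨heM, by simpa using hd, Or.inr h⟩
          rw [hu0] at hmem
          simp at hmem
    · intro h
      simp only [Finset.mem_insert, Finset.mem_singleton] at h
      rcases h with rfl | rfl | rfl
      · exact ⟨hiE, Or.inr rfl⟩
      · exact ⟨heE, Or.inr hsame.2.symm⟩
      · exact ⟨hevE, Or.inl htev⟩

/-- The main induction along the reduction sequence. -/
lemma par_main {hi he : ℕ} :
    ∀ (S : List (Fin n × Fin n)) (M : Net n), Par M hi he → M.IsRedSeq S →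
      (M.reduceSeq S).E = ∅ → ∃ i, i < S.length ∧ Config (M.reduceSeq (S.take i)) hi he := by
  intro S
  induction S with
  | nil =>
    intro M P _ hE
    exfalso
    have : hi ∈ (M.reduceSeq []).E := P.hiE
    rw [hE] at this
    simp at this
  | cons s S ih =>
    intro M P hseq hE
    have hC : M.IsCherry s.1 s.2 := hseq.1
    have hstep : Config M hi he ∨ Par (M.reduceCherry s.1 s.2) hi he := by
      by_cases hT : M.TreeCherry s.1 s.2
      · right
        have : M.reduceCherry s.1 s.2 = M.reduceTree s.1 s.2 := by
          rw [Net.reduceCherry, if_pos hT]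
        rw [this]
        exact par_treeStep P hT
      · have hR : M.RetCherry s.1 s.2 := hC.resolve_left hT
        rcases par_retStep P hR with h | h
        · exact Or.inl h
        · right
          have : M.reduceCherry s.1 s.2 = M.reduceRet s.1 s.2 := by
            rw [Net.reduceCherry, if_neg hT, if_pos hR]
          rw [this]
          exact h
    rcases hstep with h | h
    · exact ⟨0, by simp, h⟩
    · obtain ⟨i, hlen, hcfg⟩ := ih _ h hseq.2 hE
      exact ⟨i + 1, by simpa using hlen, hcfg⟩

end Net

/-- Prop. 4, part 1: any complete reduction sequence of an
orchard network with parallel edges `h_i, h_e` passes through a stage whose reduced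
network contains the network `N_2` (a root with two parallel edges to a hybrid,
each with a pendant leaf) as a connected component containing `h_i` and `h_e`. -/
theorem stmt10 {n : ℕ} (N : Net n) (hN : N.Good)
    (hi he : ℕ) (hne : hi ≠ he) (hiE : hi ∈ N.E) (heE : he ∈ N.E)
    (hsame : N.tail hi = N.tail he ∧ N.head hi = N.head he)
    (S : List (Fin n × Fin n)) (hS : N.IsRedSeq S)
    (L0 : Finset (Fin n)) (hcomp : (N.reduceSeq S).IsTrivialForest L0) :
    ∃ i < S.length,
      let M := N.reduceSeq (S.take i)
      ∃ u v x y e1 e2 : ℕ,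
        ([u, v, x, y] : List ℕ).Nodup ∧
        u ∈ M.V ∧ v ∈ M.V ∧ x ∈ M.V ∧ y ∈ M.V ∧
        ([hi, he, e1, e2] : List ℕ).Nodup ∧
        hi ∈ M.E ∧ he ∈ M.E ∧ e1 ∈ M.E ∧ e2 ∈ M.E ∧
        M.dir hi = true ∧ M.tail hi = u ∧ M.head hi = v ∧
        M.dir he = true ∧ M.tail he = u ∧ M.head he = v ∧
        M.dir e1 = true ∧ M.tail e1 = u ∧ M.head e1 = y ∧
        M.dir e2 = true ∧ M.tail e2 = v ∧ M.head e2 = x ∧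
        (M.lbl x).isSome ∧ (M.lbl y).isSome ∧
        (∀ e ∈ M.E,
          (M.tail e = u ∨ M.tail e = v ∨ M.tail e = x ∨ M.tail e = y ∨
            M.head e = u ∨ M.head e = v ∨ M.head e = x ∨ M.head e = y) →
          e = hi ∨ e = he ∨ e = e1 ∨ e = e2) := by
  have P0 : Net.Par N hi he := Net.par_init hN hne hiE heE hsame
  obtain ⟨i, hlen, hcfg⟩ := Net.par_main S N P0 hS hcomp.1
  exact ⟨i, hlen, hcfg⟩

end
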